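/- arXiv:1506.07420 — 3 statements merged into one kernel-verified Lean document; each statement's English description precedes it below -/
import Mathlib

section
/- Let H(x) = tanh(x/√2), Y₁(x) = 2^(-3/4)·√3·tanh(x/√2)·sech(x/√2), and f(x) = (3/2)·( H(x)·Y₁(x)² - (∫_ℝ H(y)·Y₁(y)³ dy)·Y₁(x) ). Then f is odd, ∫_ℝ f(x)·Y₁(x) dx = 0, there is a constant C > 0 with |f(x)| + |f'(x)| ≤ C·e^(-|x|/√2) for all x, and there exists a unique odd, twice differentiable function q : ℝ → ℝ with q and q' square integrable satisfying -q''(x) + 2·q(x) - 3·sech²(x/√2)·q(x) = f(x) for all x; moreover this q satisfies |q(x)| + |q'(x)| ≤ C'·e^(-|x|/√2) for all x, for some constant C' > 0. -/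
open MeasureTheory Set Filter Topology

noncomputable def sech (x : ℝ) : ℝ := 1 / Real.cosh x
noncomputable def Hkink (x : ℝ) : ℝ := Real.tanh (x / Real.sqrt 2)
noncomputable def Y1 (x : ℝ) : ℝ :=
  (2 : ℝ) ^ (-(3 : ℝ) / 4) * Real.sqrt 3 * Real.tanh (x / Real.sqrt 2) * sech (x / Real.sqrt 2)
noncomputable def fsrc (x : ℝ) : ℝ :=
  (3 / 2) * (Hkink x * (Y1 x) ^ 2 - (∫ y : ℝ, Hkink y * (Y1 y) ^ 3) * Y1 x)

/-- The admissibility conditions on the solution `q` of `L q = fsrc`: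
odd, twice differentiable, with `q` and `q'` square integrable, solving the ODE. -/
def Psol (q : ℝ → ℝ) : Prop :=
  (∀ x, q (-x) = -q x) ∧
  Differentiable ℝ q ∧ Differentiable ℝ (deriv q) ∧
  Integrable (fun x => (q x) ^ 2) ∧
  Integrable (fun x => (deriv q x) ^ 2) ∧
  (∀ x : ℝ, -(deriv (deriv q)) x + 2 * q x - 3 * sech (x / Real.sqrt 2) ^ 2 * q x = fsrc x)

noncomputable def Tt (x : ℝ) : ℝ := Real.tanh (x / Real.sqrt 2)
noncomputable def Ss (x : ℝ) : ℝ := sech (x / Real.sqrt 2)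
noncomputable def Cc : ℝ := (2:ℝ) ^ (-(3:ℝ)/4) * Real.sqrt 3
noncomputable def A0 : ℝ := ∫ y : ℝ, Hkink y * Y1 y ^ 3

lemma sqrt2_pos : (0:ℝ) < Real.sqrt 2 := Real.sqrt_pos.mpr (by norm_num)
lemma sqrt2_ne : (Real.sqrt 2 : ℝ) ≠ 0 := ne_of_gt sqrt2_pos
lemma sqrt2_sq : Real.sqrt 2 * Real.sqrt 2 = 2 := Real.mul_self_sqrt (by norm_num)

lemma cosh_ne (y : ℝ) : Real.cosh y ≠ 0 := ne_of_gt (Real.cosh_pos y)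

lemma hTS (x : ℝ) : Tt x ^ 2 + Ss x ^ 2 = 1 := by
  simp only [Tt, Ss, sech, Real.tanh_eq_sinh_div_cosh]
  have h := Real.cosh_sq (x / Real.sqrt 2)
  field_simp
  linarith

lemma Ss_pos (x : ℝ) : 0 < Ss x := by
  simp only [Ss, sech]
  positivity

lemma Ss_le_one (x : ℝ) : Ss x ≤ 1 := by
  simp only [Ss, sech]
  rw [div_le_one (Real.cosh_pos _)]
  exact Real.one_le_cosh _

lemma Tt_le_one (x : ℝ) : |Tt x| ≤ 1 := by
  have h := hTS x
  have h2 := (Ss_pos x)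
  rw [abs_le]
  constructor <;> nlinarith

lemma Tt_odd (x : ℝ) : Tt (-x) = -Tt x := by
  simp only [Tt, neg_div, Real.tanh_neg]

lemma Ss_even (x : ℝ) : Ss (-x) = Ss x := by
  simp only [Ss, sech, neg_div, Real.cosh_neg]

lemma hT' (x : ℝ) : HasDerivAt Tt (Ss x ^ 2 / Real.sqrt 2) x := by
  have hu : HasDerivAt (fun y : ℝ => y / Real.sqrt 2) (1 / Real.sqrt 2) x := by
    simpa using (hasDerivAt_id x).div_const (Real.sqrt 2)
  have ht : HasDerivAt Real.tanh (Ss x ^ 2) (x / Real.sqrt 2) := by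
    have hs := Real.hasDerivAt_sinh (x / Real.sqrt 2)
    have hc := Real.hasDerivAt_cosh (x / Real.sqrt 2)
    have := hs.div hc (cosh_ne _)
    have heq : (Real.cosh (x / Real.sqrt 2) * Real.cosh (x / Real.sqrt 2) -
        Real.sinh (x / Real.sqrt 2) * Real.sinh (x / Real.sqrt 2)) /
        Real.cosh (x / Real.sqrt 2) ^ 2 = Ss x ^ 2 := by
      have h := Real.cosh_sq (x / Real.sqrt 2)
      simp only [Ss, sech]
      field_simp
      nlinarith
    rw [heq] at this
    apply this.congr_of_eventuallyEq
    filter_upwards with y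
    rw [Real.tanh_eq_sinh_div_cosh]; rfl
  have := ht.comp x hu
  exact this.congr_deriv (by ring)

lemma hS' (x : ℝ) : HasDerivAt Ss (-(Tt x * Ss x) / Real.sqrt 2) x := by
  have hu : HasDerivAt (fun y : ℝ => y / Real.sqrt 2) (1 / Real.sqrt 2) x := by
    simpa using (hasDerivAt_id x).div_const (Real.sqrt 2)
  have hc : HasDerivAt (fun y : ℝ => Real.cosh (y / Real.sqrt 2))
      (Real.sinh (x / Real.sqrt 2) / Real.sqrt 2) x := by
    have := (Real.hasDerivAt_cosh (x / Real.sqrt 2)).comp x hu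
    exact this.congr_deriv (by ring)
  have hinv := hc.inv (cosh_ne _)
  have heq : -(Real.sinh (x / Real.sqrt 2) / Real.sqrt 2) / Real.cosh (x / Real.sqrt 2) ^ 2
      = -(Tt x * Ss x) / Real.sqrt 2 := by
    simp only [Tt, Ss, sech, Real.tanh_eq_sinh_div_cosh]
    field_simp
  rw [heq] at hinv
  apply hinv.congr_of_eventuallyEq
  filter_upwards with y
  simp [Ss, sech, one_div]

example : True := trivial

lemma Ss_le_exp (x : ℝ) : Ss x ≤ 2 * Real.exp (-|x| / Real.sqrt 2) := by
  have h1 : Real.exp (|x| / Real.sqrt 2) / 2 ≤ Real.cosh (x / Real.sqrt 2) := by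
    rw [← Real.cosh_abs, abs_div, abs_of_nonneg sqrt2_pos.le, Real.cosh_eq]
    have := Real.exp_pos (-(|x| / Real.sqrt 2))
    linarith
  have h2 : 0 < Real.exp (|x| / Real.sqrt 2) / 2 := by positivity
  have h3 : Ss x ≤ 2 / Real.exp (|x| / Real.sqrt 2) := by
    simp only [Ss, sech]
    rw [div_le_div_iff₀ (Real.cosh_pos _) (Real.exp_pos _)]
    nlinarith [Real.cosh_pos (x / Real.sqrt 2)]
  calc Ss x ≤ 2 / Real.exp (|x| / Real.sqrt 2) := h3
    _ = 2 * Real.exp (-|x| / Real.sqrt 2) := by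
        rw [neg_div, Real.exp_neg]; ring

lemma exp_le_one (x : ℝ) : Real.exp (-|x| / Real.sqrt 2) ≤ 1 := by
  rw [Real.exp_le_one_iff]
  apply div_nonpos_of_nonpos_of_nonneg (neg_nonpos.mpr (abs_nonneg x)) sqrt2_pos.le

lemma xSs_le (x : ℝ) : |x| * Ss x ≤ 4 := by
  have h1 : |x| ≤ Real.sqrt 2 * Real.exp (|x| / Real.sqrt 2) := by
    have h := Real.add_one_le_exp (|x| / Real.sqrt 2)
    have h2 : |x| / Real.sqrt 2 ≤ Real.exp (|x| / Real.sqrt 2) := by linarith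
    calc |x| = (|x| / Real.sqrt 2) * Real.sqrt 2 := by field_simp
      _ ≤ Real.exp (|x| / Real.sqrt 2) * Real.sqrt 2 := by
          apply mul_le_mul_of_nonneg_right h2 sqrt2_pos.le
      _ = Real.sqrt 2 * Real.exp (|x| / Real.sqrt 2) := by ring
  have h2 := Ss_le_exp x
  have h3 : 0 ≤ Ss x := (Ss_pos x).le
  have h4 : Real.exp (|x| / Real.sqrt 2) * Real.exp (-|x| / Real.sqrt 2) = 1 := by
    rw [← Real.exp_add, show |x| / Real.sqrt 2 + -|x| / Real.sqrt 2 = 0 by ring, Real.exp_zero]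
  have h5 : Real.sqrt 2 ≤ 2 := by
    nlinarith [sqrt2_sq, sqrt2_pos]
  calc |x| * Ss x ≤ (Real.sqrt 2 * Real.exp (|x| / Real.sqrt 2)) * (2 * Real.exp (-|x| / Real.sqrt 2)) := by
        apply mul_le_mul h1 h2 h3
        positivity
    _ = 2 * Real.sqrt 2 := by
        rw [show Real.sqrt 2 * Real.exp (|x| / Real.sqrt 2) * (2 * Real.exp (-|x| / Real.sqrt 2))
          = 2 * Real.sqrt 2 * (Real.exp (|x| / Real.sqrt 2) * Real.exp (-|x| / Real.sqrt 2)) by ring, h4]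
        ring
    _ ≤ 4 := by linarith

lemma cont_Tt : Continuous Tt := by
  have : Differentiable ℝ Tt := fun x => (hT' x).differentiableAt
  exact this.continuous

lemma cont_Ss : Continuous Ss := by
  have : Differentiable ℝ Ss := fun x => (hS' x).differentiableAt
  exact this.continuous

lemma integrable_exp_decay : Integrable (fun x : ℝ => Real.exp (-|x| / Real.sqrt 2)) := by
  have hb : (0:ℝ) < (Real.sqrt 2)⁻¹ := inv_pos.mpr sqrt2_pos
  have hIoi : IntegrableOn (fun x : ℝ => Real.exp (-|x| / Real.sqrt 2)) (Ioi 0) := by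
    have := exp_neg_integrableOn_Ioi 0 hb
    apply this.congr_fun ?_ measurableSet_Ioi
    intro y hy
    simp only []
    rw [abs_of_pos hy]
    ring_nf
  have hIic : IntegrableOn (fun x : ℝ => Real.exp (-|x| / Real.sqrt 2)) (Iic 0) := by
    have h_map_neg : (volume.restrict (Ici (0:ℝ))).map Neg.neg = volume.restrict (Iic (0:ℝ)) := by
      conv => rhs; rw [← Measure.map_neg_eq_self (volume : Measure ℝ),
        (measurableEmbedding_neg (α := ℝ)).restrict_map]
      simp
    have hIci : IntegrableOn (fun x : ℝ => Real.exp (-|x| / Real.sqrt 2)) (Ici 0) := by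
      rwa [integrableOn_Ici_iff_integrableOn_Ioi]
    rw [IntegrableOn, ← h_map_neg, (measurableEmbedding_neg (α := ℝ)).integrable_map_iff]
    apply hIci.congr_fun ?_ measurableSet_Ici
    intro y _
    simp [Function.comp, abs_neg]
  rw [← integrableOn_univ, ← Iic_union_Ioi (a := (0:ℝ)), integrableOn_union]
  exact ⟨hIic, hIoi⟩

lemma integrable_of_le_exp {g : ℝ → ℝ} {K : ℝ} (hc : Continuous g)
    (hb : ∀ x, |g x| ≤ K * Real.exp (-|x| / Real.sqrt 2)) : Integrable g := by
  apply Integrable.mono (integrable_exp_decay.const_mul K) hc.aestronglyMeasurable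
  filter_upwards with x
  rw [Real.norm_eq_abs, Real.norm_eq_abs]
  calc |g x| ≤ K * Real.exp (-|x| / Real.sqrt 2) := hb x
    _ ≤ |K * Real.exp (-|x| / Real.sqrt 2)| := le_abs_self _
lemma Hkink_eq (x : ℝ) : Hkink x = Tt x := rfl

lemma Y1_eq (x : ℝ) : Y1 x = Cc * (Tt x * Ss x) := by
  simp only [Y1, Cc, Tt, Ss]; ring

lemma Cc_pos : 0 < Cc := by
  apply mul_pos (Real.rpow_pos_of_pos (by norm_num) _)
  exact Real.sqrt_pos.mpr (by norm_num)

lemma Cc_le_two : Cc ≤ 2 := by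
  have h1 : (2:ℝ) ^ (-(3:ℝ)/4) ≤ 1 := by
    apply Real.rpow_le_one_of_one_le_of_nonpos (by norm_num) (by norm_num)
  have h2 : Real.sqrt 3 ≤ 2 := by
    rw [show (2:ℝ) = Real.sqrt 4 by rw [show (4:ℝ) = 2^2 by norm_num, Real.sqrt_sq (by norm_num)]]
    exact Real.sqrt_le_sqrt (by norm_num)
  have h3 : 0 ≤ Real.sqrt 3 := Real.sqrt_nonneg 3
  have h4 : (0:ℝ) < (2:ℝ) ^ (-(3:ℝ)/4) := Real.rpow_pos_of_pos (by norm_num) _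
  simp only [Cc]
  nlinarith

lemma Cc_sq : Cc ^ 2 * (2 * Real.sqrt 2) = 3 := by
  have h1 : ((2:ℝ) ^ (-(3:ℝ)/4)) ^ 2 = (2:ℝ) ^ (-(3:ℝ)/2) := by
    rw [← Real.rpow_natCast ((2:ℝ) ^ (-(3:ℝ)/4)) 2, ← Real.rpow_mul (by norm_num)]
    norm_num
  have h2 : (Real.sqrt 3) ^ 2 = 3 := Real.sq_sqrt (by norm_num)
  have h3 : (2:ℝ) ^ (-(3:ℝ)/2) * (2 * Real.sqrt 2) = 1 := by
    rw [Real.sqrt_eq_rpow,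
      show (2:ℝ) * (2:ℝ) ^ ((1:ℝ)/2) = (2:ℝ) ^ (1:ℝ) * (2:ℝ) ^ ((1:ℝ)/2) by rw [Real.rpow_one],
      ← Real.rpow_add (by norm_num : (0:ℝ) < 2), ← Real.rpow_add (by norm_num : (0:ℝ) < 2)]
    norm_num
  simp only [Cc]
  calc ((2:ℝ) ^ (-(3:ℝ)/4) * Real.sqrt 3) ^ 2 * (2 * Real.sqrt 2)
      = (((2:ℝ) ^ (-(3:ℝ)/4)) ^ 2 * (2 * Real.sqrt 2)) * (Real.sqrt 3) ^ 2 := by ring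
    _ = 3 := by rw [h1, h2, h3]; norm_num
lemma fsrc_eq (x : ℝ) : fsrc x = (3/2)*Cc^2*(Tt x^3*Ss x^2) - (3/2)*A0*Cc*(Tt x*Ss x) := by
  have h : fsrc x = (3/2) * (Hkink x * (Y1 x)^2 - A0 * Y1 x) := rfl
  rw [h, Hkink_eq, Y1_eq]; ring

lemma abs_mul_le {a b c d : ℝ} (h1 : |a| ≤ c) (h2 : |b| ≤ d) : |a*b| ≤ c*d := by
  rw [abs_mul]
  exact mul_le_mul h1 h2 (abs_nonneg _) ((abs_nonneg a).trans h1)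

lemma TS_bound (a b : ℕ) (x : ℝ) (hb : 1 ≤ b) : |Tt x ^ a * Ss x ^ b| ≤ Ss x := by
  rw [abs_mul, abs_pow, abs_pow, abs_of_pos (Ss_pos x)]
  calc |Tt x| ^ a * Ss x ^ b ≤ 1 * Ss x ^ 1 := by
        apply mul_le_mul (pow_le_one₀ (abs_nonneg _) (Tt_le_one x))
          (pow_le_pow_of_le_one (Ss_pos x).le (Ss_le_one x) hb)
          (pow_nonneg (Ss_pos x).le b) (by norm_num)
    _ = Ss x := by simp

lemma fsrc_odd (x : ℝ) : fsrc (-x) = -fsrc x := by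
  rw [fsrc_eq, fsrc_eq, Tt_odd, Ss_even]; ring

noncomputable def fsrc' (x : ℝ) : ℝ :=
  (3/2)*Cc^2/Real.sqrt 2*(3*Tt x^2*Ss x^4 - 2*Tt x^4*Ss x^2)
  - (3/2)*A0*Cc/Real.sqrt 2*(Ss x^3 - Tt x^2*Ss x)

lemma hfsrc' (x : ℝ) : HasDerivAt fsrc (fsrc' x) x := by
  have h1 : HasDerivAt (fun y => (3/2)*Cc^2*(Tt y^3*Ss y^2) - (3/2)*A0*Cc*(Tt y*Ss y))
      (fsrc' x) x := by
    have hA : HasDerivAt (fun y => Tt y^3*Ss y^2)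
        (3*Tt x^2*(Ss x^2/Real.sqrt 2)*Ss x^2 + Tt x^3*(2*Ss x*(-(Tt x*Ss x)/Real.sqrt 2))) x := by
      have := (((hT' x).pow 3).mul ((hS' x).pow 2))
      refine this.congr_deriv ?_
      simp only [Pi.pow_apply]; ring
    have hB : HasDerivAt (fun y => Tt y*Ss y)
        ((Ss x^2/Real.sqrt 2)*Ss x + Tt x*(-(Tt x*Ss x)/Real.sqrt 2)) x := (hT' x).mul (hS' x)
    have := (hA.const_mul ((3:ℝ)/2*Cc^2)).sub (hB.const_mul ((3:ℝ)/2*A0*Cc))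
    refine this.congr_deriv ?_
    simp only [fsrc']
    field_simp
    ring
  have heq : fsrc = fun y => (3/2)*Cc^2*(Tt y^3*Ss y^2) - (3/2)*A0*Cc*(Tt y*Ss y) :=
    funext fsrc_eq
  rw [heq]
  exact h1

lemma deriv_fsrc (x : ℝ) : deriv fsrc x = fsrc' x := (hfsrc' x).deriv

lemma sqrt2_ge_one : (1:ℝ) ≤ Real.sqrt 2 := by
  nlinarith [sqrt2_sq, sqrt2_pos]

lemma inv_sqrt2_le_one {c : ℝ} (hc : 0 ≤ c) : |c / Real.sqrt 2| ≤ c := by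
  rw [abs_div, abs_of_pos sqrt2_pos, abs_of_nonneg hc, div_le_iff₀ sqrt2_pos]
  nlinarith [sqrt2_ge_one]

lemma fsrc_bound (x : ℝ) : |fsrc x| ≤ ((3/2)*Cc^2 + (3/2)*|A0| * Cc) * Ss x := by
  rw [fsrc_eq]
  have hC := Cc_pos
  have e1 : |(3/2)*Cc^2*(Tt x^3*Ss x^2)| ≤ ((3/2)*Cc^2) * Ss x :=
    abs_mul_le (le_of_eq (abs_of_nonneg (by positivity))) (TS_bound 3 2 x (by norm_num))
  have e2 : |(3/2)*A0*Cc*(Tt x*Ss x)| ≤ ((3/2)*|A0| * Cc) * Ss x := by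
    apply abs_mul_le ?_ (by simpa using TS_bound 1 1 x le_rfl)
    rw [abs_mul, abs_mul, abs_of_nonneg (by norm_num : (0:ℝ) ≤ 3/2), abs_of_pos hC]
  calc |(3/2)*Cc^2*(Tt x^3*Ss x^2) - (3/2)*A0*Cc*(Tt x*Ss x)|
      ≤ |(3/2)*Cc^2*(Tt x^3*Ss x^2)| + |(3/2)*A0*Cc*(Tt x*Ss x)| := abs_sub _ _
    _ ≤ ((3/2)*Cc^2) * Ss x + ((3/2)*|A0| * Cc) * Ss x := add_le_add e1 e2
    _ = ((3/2)*Cc^2 + (3/2)*|A0| * Cc) * Ss x := by ring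

lemma fsrc'_bound (x : ℝ) : |fsrc' x| ≤ ((15/2)*Cc^2 + 3*|A0| * Cc) * Ss x := by
  simp only [fsrc']
  have hC := Cc_pos
  have hS := (Ss_pos x)
  have hin1 : |3*Tt x^2*Ss x^4 - 2*Tt x^4*Ss x^2| ≤ 5 * Ss x := by
    have a1 : |3*Tt x^2*Ss x^4| ≤ 3 * Ss x := by
      rw [show (3:ℝ)*Tt x^2*Ss x^4 = 3*(Tt x^2*Ss x^4) by ring]
      exact abs_mul_le (by norm_num) (TS_bound 2 4 x (by norm_num))
    have a2 : |2*Tt x^4*Ss x^2| ≤ 2 * Ss x := by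
      rw [show (2:ℝ)*Tt x^4*Ss x^2 = 2*(Tt x^4*Ss x^2) by ring]
      exact abs_mul_le (by norm_num) (TS_bound 4 2 x (by norm_num))
    calc |3*Tt x^2*Ss x^4 - 2*Tt x^4*Ss x^2| ≤ |3*Tt x^2*Ss x^4| + |2*Tt x^4*Ss x^2| := abs_sub _ _
      _ ≤ 3 * Ss x + 2 * Ss x := add_le_add a1 a2
      _ = 5 * Ss x := by ring
  have hin2 : |Ss x^3 - Tt x^2*Ss x| ≤ 2 * Ss x := by
    have a1 : |Ss x^3| ≤ Ss x := by simpa using TS_bound 0 3 x (by norm_num)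
    have a2 : |Tt x^2*Ss x| ≤ Ss x := by simpa using TS_bound 2 1 x le_rfl
    calc |Ss x^3 - Tt x^2*Ss x| ≤ |Ss x^3| + |Tt x^2*Ss x| := abs_sub _ _
      _ ≤ Ss x + Ss x := add_le_add a1 a2
      _ = 2 * Ss x := by ring
  have e1 : |(3/2)*Cc^2/Real.sqrt 2*(3*Tt x^2*Ss x^4 - 2*Tt x^4*Ss x^2)|
      ≤ ((3/2)*Cc^2) * (5 * Ss x) :=
    abs_mul_le (inv_sqrt2_le_one (by positivity)) hin1
  have e2 : |(3/2)*A0*Cc/Real.sqrt 2*(Ss x^3 - Tt x^2*Ss x)| ≤ ((3/2)*|A0| * Cc) * (2 * Ss x) := by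
    apply abs_mul_le ?_ hin2
    have h0 : |(3/2)*A0*Cc| = (3/2)*|A0| * Cc := by
      rw [abs_mul, abs_mul, abs_of_nonneg (by norm_num : (0:ℝ) ≤ 3/2), abs_of_pos hC]
    calc |(3/2)*A0*Cc/Real.sqrt 2| = |(3/2)*A0*Cc| / Real.sqrt 2 := by
          rw [abs_div, abs_of_pos sqrt2_pos]
      _ ≤ |(3/2)*A0*Cc| := by
          rw [div_le_iff₀ sqrt2_pos]
          nlinarith [sqrt2_ge_one, abs_nonneg ((3:ℝ)/2*A0*Cc)]
      _ = (3/2)*|A0| * Cc := h0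
  calc |(3/2)*Cc^2/Real.sqrt 2*(3*Tt x^2*Ss x^4 - 2*Tt x^4*Ss x^2)
      - (3/2)*A0*Cc/Real.sqrt 2*(Ss x^3 - Tt x^2*Ss x)|
      ≤ |(3/2)*Cc^2/Real.sqrt 2*(3*Tt x^2*Ss x^4 - 2*Tt x^4*Ss x^2)|
        + |(3/2)*A0*Cc/Real.sqrt 2*(Ss x^3 - Tt x^2*Ss x)| := abs_sub _ _
    _ ≤ ((3/2)*Cc^2) * (5 * Ss x) + ((3/2)*|A0| * Cc) * (2 * Ss x) := add_le_add e1 e2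
    _ = ((15/2)*Cc^2 + 3*|A0| * Cc) * Ss x := by ring
lemma tanh_formula (y : ℝ) :
    Real.tanh y = (1 - Real.exp (-2*y)) / (1 + Real.exp (-2*y)) := by
  have he : Real.exp y * Real.exp (-y) = 1 := by
    rw [← Real.exp_add]; simp
  have h2 : Real.exp (-2*y) = Real.exp (-y) * Real.exp (-y) := by
    rw [← Real.exp_add]; ring_nf
  have hpos : (0:ℝ) < 1 + Real.exp (-2*y) := by positivity
  rw [Real.tanh_eq_sinh_div_cosh, Real.sinh_eq, Real.cosh_eq]
  rw [div_eq_div_iff (by positivity) (by positivity)]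
  rw [h2]
  nlinarith [he, Real.exp_pos y, Real.exp_pos (-y)]

lemma Tt_tendsto_atTop : Tendsto Tt atTop (𝓝 1) := by
  have hexp : Tendsto (fun x : ℝ => Real.exp (-2*(x/Real.sqrt 2))) atTop (𝓝 0) := by
    apply Real.tendsto_exp_atBot.comp
    have h1 : Tendsto (fun x : ℝ => x / Real.sqrt 2) atTop atTop :=
      tendsto_id.atTop_div_const sqrt2_pos
    have h2 : Tendsto (fun y : ℝ => -2*y) atTop atBot := by
      apply tendsto_id.const_mul_atTop_of_neg (by norm_num : (-2:ℝ) < 0)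
    exact h2.comp h1
  have heq : Tt = fun x => (1 - Real.exp (-2*(x/Real.sqrt 2))) / (1 + Real.exp (-2*(x/Real.sqrt 2))) := by
    funext x; rw [Tt]; exact tanh_formula _
  rw [heq]
  have := ((tendsto_const_nhds (x := (1:ℝ))).sub hexp).div
    ((tendsto_const_nhds (x := (1:ℝ))).add hexp) (by norm_num)
  rw [show ((1:ℝ) - 0) / (1 + 0) = 1 by norm_num] at this
  exact this

lemma Tt_tendsto_atBot : Tendsto Tt atBot (𝓝 (-1)) := by
  have h1 : Tendsto (fun x : ℝ => Tt (-x)) atBot (𝓝 1) :=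
    Tt_tendsto_atTop.comp tendsto_neg_atBot_atTop
  have h2 : Tendsto (fun x : ℝ => -Tt (-x)) atBot (𝓝 (-1)) := by
    simpa using h1.neg
  apply h2.congr
  intro x
  rw [← Tt_odd]
  simp

lemma Y1sq_eq (x : ℝ) : Y1 x ^ 2 = Cc^2 * (Tt x^2 * Ss x^2) := by
  rw [Y1_eq]; ring

lemma cont_Y1sq : Continuous (fun x => Y1 x ^ 2) := by
  have : Continuous Y1 := by
    have h : Y1 = fun x => Cc * (Tt x * Ss x) := funext Y1_eq
    rw [h]
    exact (continuous_const.mul (cont_Tt.mul cont_Ss))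
  exact this.pow 2

lemma integrable_Y1sq : Integrable (fun x => Y1 x ^ 2) := by
  apply integrable_of_le_exp cont_Y1sq (K := Cc^2 * 2)
  intro x
  have h1 : |Y1 x ^ 2| ≤ Cc^2 * Ss x := by
    rw [Y1sq_eq]
    exact abs_mul_le (le_of_eq (abs_of_nonneg (by positivity))) (TS_bound 2 2 x (by norm_num))
  calc |Y1 x ^2| ≤ Cc^2 * Ss x := h1
    _ ≤ Cc^2 * (2 * Real.exp (-|x| / Real.sqrt 2)) := by
        apply mul_le_mul_of_nonneg_left (Ss_le_exp x) (by positivity)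
    _ = Cc^2 * 2 * Real.exp (-|x| / Real.sqrt 2) := by ring

lemma HY13_eq (x : ℝ) : Hkink x * Y1 x ^ 3 = Cc^3 * (Tt x^4 * Ss x^3) := by
  rw [Hkink_eq, Y1_eq]; ring

lemma integrable_HY13 : Integrable (fun x => Hkink x * Y1 x ^ 3) := by
  have hco : Continuous (fun x => Hkink x * Y1 x ^ 3) := by
    have h : (fun x => Hkink x * Y1 x ^ 3) = fun x => Cc^3 * (Tt x^4 * Ss x^3) :=
      funext HY13_eq
    rw [h]
    exact continuous_const.mul ((cont_Tt.pow 4).mul (cont_Ss.pow 3))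
  apply integrable_of_le_exp hco (K := Cc^3 * 2)
  intro x
  have h1 : |Hkink x * Y1 x ^ 3| ≤ Cc^3 * Ss x := by
    rw [HY13_eq]
    exact abs_mul_le (le_of_eq (abs_of_nonneg (pow_nonneg Cc_pos.le 3))) (TS_bound 4 3 x (by norm_num))
  calc |Hkink x * Y1 x ^3| ≤ Cc^3 * Ss x := h1
    _ ≤ Cc^3 * (2 * Real.exp (-|x| / Real.sqrt 2)) := by
        apply mul_le_mul_of_nonneg_left (Ss_le_exp x) (pow_nonneg Cc_pos.le 3)
    _ = Cc^3 * 2 * Real.exp (-|x| / Real.sqrt 2) := by ring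

lemma int_Y1sq : (∫ x : ℝ, Y1 x ^ 2) = 1 := by
  set G : ℝ → ℝ := fun x => Cc^2 * Real.sqrt 2 / 3 * Tt x^3 with hGdef
  have hG : ∀ x, HasDerivAt G (Y1 x ^ 2) x := by
    intro x
    have h1 : HasDerivAt (fun y => Tt y ^ 3) (3 * Tt x^2 * (Ss x^2 / Real.sqrt 2)) x := by
      exact ((hT' x).pow 3).congr_deriv (by norm_num)
    have := h1.const_mul (Cc^2 * Real.sqrt 2 / 3)
    refine this.congr_deriv ?_
    rw [Y1sq_eq]
    field_simp
  have hTop : Tendsto G atTop (𝓝 (Cc^2 * Real.sqrt 2 / 3)) := by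
    have := (Tt_tendsto_atTop.pow 3).const_mul (Cc^2 * Real.sqrt 2 / 3)
    simpa using this
  have hBot : Tendsto G atBot (𝓝 (-(Cc^2 * Real.sqrt 2 / 3))) := by
    have := (Tt_tendsto_atBot.pow 3).const_mul (Cc^2 * Real.sqrt 2 / 3)
    have heq : Cc ^ 2 * Real.sqrt 2 / 3 * (-1) ^ 3 = -(Cc^2 * Real.sqrt 2 / 3) := by ring
    rw [heq] at this
    exact this
  have hIoi : ∫ x in Ioi (0:ℝ), Y1 x ^ 2 = Cc^2 * Real.sqrt 2 / 3 - G 0 :=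
    integral_Ioi_of_hasDerivAt_of_tendsto' (fun y _ => hG y) integrable_Y1sq.integrableOn hTop
  have hIic : ∫ x in Iic (0:ℝ), Y1 x ^ 2 = G 0 - (-(Cc^2 * Real.sqrt 2 / 3)) :=
    integral_Iic_of_hasDerivAt_of_tendsto' (fun y _ => hG y) integrable_Y1sq.integrableOn hBot
  have hsplit : (∫ x : ℝ, Y1 x ^ 2) = (∫ x in Iic (0:ℝ), Y1 x ^ 2) + ∫ x in Ioi (0:ℝ), Y1 x ^ 2 := by
    rw [← integral_add_compl (measurableSet_Iic (a := (0:ℝ))) integrable_Y1sq, compl_Iic]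
  rw [hsplit, hIoi, hIic]
  have h : Cc ^ 2 * Real.sqrt 2 = 3/2 := by linarith [Cc_sq]
  have hG0 : G 0 = 0 := by
    simp [hGdef, Tt, Real.tanh_zero]
  rw [hG0, h]
  norm_num
noncomputable def kap : ℝ := (Real.sqrt 2)⁻¹

lemma hkap2 : 2 * kap^2 = 1 := by
  have h : kap^2 = ((Real.sqrt 2)^2)⁻¹ := by rw [kap, inv_pow]
  rw [h, Real.sq_sqrt (by norm_num : (0:ℝ) ≤ 2)]
  norm_num

lemma kap_pos : 0 < kap := inv_pos.mpr sqrt2_pos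

lemma kap_le_one : kap ≤ 1 := by
  rw [kap, inv_le_one_iff₀]
  right; exact sqrt2_ge_one

lemma hCc2 : Cc^2 = 3 * kap / 2 := by
  have h := Cc_sq
  have h2 : kap * Real.sqrt 2 = 1 := inv_mul_cancel₀ sqrt2_ne
  nlinarith [sqrt2_pos]

lemma hT2 (x : ℝ) : HasDerivAt Tt (kap * Ss x^2) x := by
  have := hT' x
  rwa [div_eq_mul_inv, mul_comm, ← kap] at this

lemma hS2 (x : ℝ) : HasDerivAt Ss (-(kap * (Tt x * Ss x))) x := by
  have := hS' x
  rwa [neg_div, div_eq_mul_inv, mul_comm, ← kap] at this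

noncomputable def qsol (x : ℝ) : ℝ :=
  (9/16)*(x*Ss x^2) - (3*kap/4)*(Tt x*Ss x^2) - (A0*Cc)*(Tt x*Ss x)

noncomputable def qsol' (x : ℝ) : ℝ :=
  (9/16)*Ss x^2 - (9*kap/8)*(x*Tt x*Ss x^2)
  - (3*kap^2/4)*(Ss x^4 - 2*(Tt x^2*Ss x^2)) - (A0*Cc*kap)*(Ss x^3 - Tt x^2*Ss x)

noncomputable def qsol'' (x : ℝ) : ℝ :=
  -(9*kap/4)*(Tt x*Ss x^2) - (9*kap^2/8)*(x*(Ss x^4 - 2*(Tt x^2*Ss x^2)))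
  + 6*kap^3*(Tt x*Ss x^4) - 3*kap^3*(Tt x^3*Ss x^2)
  - (A0*Cc*kap^2)*(Tt x^3*Ss x - 5*(Tt x*Ss x^3))

lemma hqd1 (x : ℝ) : HasDerivAt qsol (qsol' x) x := by
  have c1 : HasDerivAt (fun y => y * Ss y^2)
      (1 * Ss x^2 + x * (2 * Ss x^1 * -(kap * (Tt x * Ss x)))) x :=
    (hasDerivAt_id x).mul ((hS2 x).pow 2)
  have c2 : HasDerivAt (fun y => Tt y * Ss y^2)
      (kap * Ss x^2 * Ss x^2 + Tt x * (2 * Ss x^1 * -(kap * (Tt x * Ss x)))) x :=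
    (hT2 x).mul ((hS2 x).pow 2)
  have c3 : HasDerivAt (fun y => Tt y * Ss y)
      (kap * Ss x^2 * Ss x + Tt x * -(kap * (Tt x * Ss x))) x :=
    (hT2 x).mul (hS2 x)
  have := ((c1.const_mul ((9:ℝ)/16)).sub (c2.const_mul (3*kap/4))).sub
    (c3.const_mul (A0*Cc))
  refine this.congr_deriv ?_
  simp only [qsol']; ring

lemma hqd2 (x : ℝ) : HasDerivAt (fun y => qsol' y) (qsol'' x) x := by
  have d1 : HasDerivAt (fun y => Ss y^2) (2 * Ss x^1 * -(kap * (Tt x * Ss x))) x :=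
    (hS2 x).pow 2
  have d2 : HasDerivAt (fun y => y * Tt y * Ss y^2)
      ((1 * Tt x + x * (kap * Ss x^2)) * Ss x^2
        + x * Tt x * (2 * Ss x^1 * -(kap * (Tt x * Ss x)))) x :=
    ((hasDerivAt_id x).mul (hT2 x)).mul ((hS2 x).pow 2)
  have d3a : HasDerivAt (fun y => Tt y^2 * Ss y^2)
      (2 * Tt x^1 * (kap * Ss x^2) * Ss x^2 + Tt x^2 * (2 * Ss x^1 * -(kap * (Tt x * Ss x)))) x :=
    ((hT2 x).pow 2).mul ((hS2 x).pow 2)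
  have d3 : HasDerivAt (fun y => Ss y^4 - 2*(Tt y^2*Ss y^2))
      ((4 * Ss x^3 * -(kap * (Tt x * Ss x)))
        - 2*(2 * Tt x^1 * (kap * Ss x^2) * Ss x^2 + Tt x^2 * (2 * Ss x^1 * -(kap * (Tt x * Ss x))))) x :=
    ((hS2 x).pow 4).sub (d3a.const_mul 2)
  have d4 : HasDerivAt (fun y => Ss y^3 - Tt y^2*Ss y)
      ((3 * Ss x^2 * -(kap * (Tt x * Ss x)))
        - (2 * Tt x^1 * (kap * Ss x^2) * Ss x + Tt x^2 * -(kap * (Tt x * Ss x)))) x :=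
    ((hS2 x).pow 3).sub (((hT2 x).pow 2).mul (hS2 x))
  have := (((d1.const_mul ((9:ℝ)/16)).sub (d2.const_mul (9*kap/8))).sub
    (d3.const_mul (3*kap^2/4))).sub (d4.const_mul (A0*Cc*kap))
  refine this.congr_deriv ?_
  simp only [qsol'']; ring

lemma qsol_ODE (x : ℝ) : -(qsol'' x) + 2*qsol x - 3*Ss x^2*qsol x = fsrc x := by
  rw [fsrc_eq]
  have h1 := hTS x
  have h2 := hkap2
  have h3 := hCc2
  simp only [qsol, qsol'']
  linear_combination
    ((9/16)*x*(Ss x^4-2*(Tt x^2*Ss x^2)) + (A0*Cc/2)*(Tt x^3*Ss x-5*(Tt x*Ss x^3))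
      + (kap/2)*(-6*(Tt x*Ss x^4)+3*(Tt x^3*Ss x^2))) * h2
    + (-(9/8)*x*Ss x^2 + (A0*Cc/2)*(Tt x*Ss x) - (3*kap/4)*(Tt x*Ss x^2)) * h1
    + (-(3/2)*Tt x^3*Ss x^2) * h3
lemma qsol_odd (x : ℝ) : qsol (-x) = -qsol x := by
  simp only [qsol, Tt_odd, Ss_even]; ring

lemma xS2_le (x : ℝ) : |x * Ss x^2| ≤ 4 * Ss x := by
  rw [abs_mul, abs_pow, abs_of_pos (Ss_pos x)]
  calc |x| * Ss x ^ 2 = (|x| * Ss x) * Ss x := by ring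
    _ ≤ 4 * Ss x := mul_le_mul_of_nonneg_right (xSs_le x) (Ss_pos x).le

lemma xTS2_le (x : ℝ) : |x * Tt x * Ss x^2| ≤ 4 * Ss x := by
  have h : |x * Tt x * Ss x^2| ≤ |x * Ss x ^ 2| * 1 := by
    rw [show x * Tt x * Ss x^2 = (x * Ss x^2) * Tt x by ring, abs_mul]
    exact mul_le_mul_of_nonneg_left (Tt_le_one x) (abs_nonneg _)
  rw [mul_one] at h
  exact h.trans (xS2_le x)

lemma abs_kap_mul {c : ℝ} (hc : 0 ≤ c) : |c * kap| ≤ c := by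
  rw [abs_mul, abs_of_nonneg hc, abs_of_pos kap_pos]
  nlinarith [kap_le_one, kap_pos]

lemma qsol_bound (x : ℝ) : |qsol x| ≤ (3 + |A0| * Cc) * Ss x := by
  simp only [qsol]
  have hS := Ss_pos x
  have e1 : |(9/16)*(x*Ss x^2)| ≤ (9/4) * Ss x := by
    have := abs_mul_le (le_of_eq (abs_of_nonneg (by norm_num : (0:ℝ) ≤ 9/16))) (xS2_le x)
    calc |(9/16)*(x*Ss x^2)| ≤ (9/16) * (4 * Ss x) := this
      _ = (9/4) * Ss x := by ring
  have e2 : |(3*kap/4)*(Tt x*Ss x^2)| ≤ (3/4) * Ss x := by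
    have h2 : |Tt x * Ss x^2| ≤ Ss x := by simpa using TS_bound 1 2 x (by norm_num)
    have h1 : |(3*kap/4)| ≤ 3/4 := by
      rw [show (3:ℝ)*kap/4 = (3/4)*kap by ring]
      exact abs_kap_mul (by norm_num)
    exact abs_mul_le h1 h2
  have e3 : |(A0*Cc)*(Tt x*Ss x)| ≤ (|A0| * Cc) * Ss x := by
    apply abs_mul_le ?_ (by simpa using TS_bound 1 1 x le_rfl)
    rw [abs_mul, abs_of_pos Cc_pos]
  calc |(9/16)*(x*Ss x^2) - (3*kap/4)*(Tt x*Ss x^2) - (A0*Cc)*(Tt x*Ss x)|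
      ≤ |(9/16)*(x*Ss x^2) - (3*kap/4)*(Tt x*Ss x^2)| + |(A0*Cc)*(Tt x*Ss x)| := abs_sub _ _
    _ ≤ (|(9/16)*(x*Ss x^2)| + |(3*kap/4)*(Tt x*Ss x^2)|) + |(A0*Cc)*(Tt x*Ss x)| :=
        add_le_add (abs_sub _ _) le_rfl
    _ ≤ ((9/4) * Ss x + (3/4) * Ss x) + (|A0| * Cc) * Ss x :=
        add_le_add (add_le_add e1 e2) e3
    _ = (3 + |A0| * Cc) * Ss x := by ring

lemma qsol'_bound (x : ℝ) : |qsol' x| ≤ (117/16 + 2*|A0| * Cc) * Ss x := by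
  simp only [qsol']
  have hS := Ss_pos x
  have e1 : |(9/16)*Ss x^2| ≤ (9/16) * Ss x := by
    have h0 : |Ss x ^ 2| ≤ Ss x := by simpa using TS_bound 0 2 x (by norm_num)
    exact abs_mul_le (le_of_eq (abs_of_nonneg (by norm_num))) h0
  have e2 : |(9*kap/8)*(x*Tt x*Ss x^2)| ≤ (9/2) * Ss x := by
    have h1 : |(9:ℝ)*kap/8| ≤ 9/8 := by
      rw [show (9:ℝ)*kap/8 = (9/8)*kap by ring]
      exact abs_kap_mul (by norm_num)
    calc |(9*kap/8)*(x*Tt x*Ss x^2)| ≤ (9/8) * (4 * Ss x) := abs_mul_le h1 (xTS2_le x)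
      _ = (9/2) * Ss x := by ring
  have e3 : |(3*kap^2/4)*(Ss x^4 - 2*(Tt x^2*Ss x^2))| ≤ (9/4) * Ss x := by
    have h1 : |(3:ℝ)*kap^2/4| ≤ 3/4 := by
      rw [abs_of_nonneg (by positivity)]
      nlinarith [kap_le_one, kap_pos]
    have h2 : |Ss x^4 - 2*(Tt x^2*Ss x^2)| ≤ 3 * Ss x := by
      have a1 : |Ss x^4| ≤ Ss x := by simpa using TS_bound 0 4 x (by norm_num)
      have a2 : |2*(Tt x^2*Ss x^2)| ≤ 2 * Ss x :=
        abs_mul_le (by norm_num) (TS_bound 2 2 x (by norm_num))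
      calc |Ss x^4 - 2*(Tt x^2*Ss x^2)| ≤ |Ss x^4| + |2*(Tt x^2*Ss x^2)| := abs_sub _ _
        _ ≤ Ss x + 2 * Ss x := add_le_add a1 a2
        _ = 3 * Ss x := by ring
    calc |(3*kap^2/4)*(Ss x^4 - 2*(Tt x^2*Ss x^2))| ≤ (3/4) * (3 * Ss x) := abs_mul_le h1 h2
      _ = (9/4) * Ss x := by ring
  have e4 : |(A0*Cc*kap)*(Ss x^3 - Tt x^2*Ss x)| ≤ (|A0| * Cc) * (2 * Ss x) := by
    have h1 : |A0*Cc*kap| ≤ |A0| * Cc := by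
      rw [show A0*Cc*kap = (A0*Cc)*kap by ring, abs_mul, abs_mul, abs_of_pos Cc_pos,
        abs_of_pos kap_pos]
      have := mul_le_mul_of_nonneg_left kap_le_one (mul_nonneg (abs_nonneg A0) Cc_pos.le)
      simpa [mul_assoc] using this
    have h2 : |Ss x^3 - Tt x^2*Ss x| ≤ 2 * Ss x := by
      have a1 : |Ss x^3| ≤ Ss x := by simpa using TS_bound 0 3 x (by norm_num)
      have a2 : |Tt x^2*Ss x| ≤ Ss x := by simpa using TS_bound 2 1 x le_rfl
      calc |Ss x^3 - Tt x^2*Ss x| ≤ |Ss x^3| + |Tt x^2*Ss x| := abs_sub _ _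
        _ ≤ Ss x + Ss x := add_le_add a1 a2
        _ = 2 * Ss x := by ring
    exact abs_mul_le h1 h2
  calc |(9/16)*Ss x^2 - (9*kap/8)*(x*Tt x*Ss x^2) - (3*kap^2/4)*(Ss x^4 - 2*(Tt x^2*Ss x^2))
      - (A0*Cc*kap)*(Ss x^3 - Tt x^2*Ss x)|
      ≤ |(9/16)*Ss x^2 - (9*kap/8)*(x*Tt x*Ss x^2) - (3*kap^2/4)*(Ss x^4 - 2*(Tt x^2*Ss x^2))|
        + |(A0*Cc*kap)*(Ss x^3 - Tt x^2*Ss x)| := abs_sub _ _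
    _ ≤ (|(9/16)*Ss x^2 - (9*kap/8)*(x*Tt x*Ss x^2)| + |(3*kap^2/4)*(Ss x^4 - 2*(Tt x^2*Ss x^2))|)
        + |(A0*Cc*kap)*(Ss x^3 - Tt x^2*Ss x)| := add_le_add (abs_sub _ _) le_rfl
    _ ≤ ((|(9/16)*Ss x^2| + |(9*kap/8)*(x*Tt x*Ss x^2)|) + |(3*kap^2/4)*(Ss x^4 - 2*(Tt x^2*Ss x^2))|)
        + |(A0*Cc*kap)*(Ss x^3 - Tt x^2*Ss x)| :=
        add_le_add (add_le_add (abs_sub _ _) le_rfl) le_rfl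
    _ ≤ (((9/16) * Ss x + (9/2) * Ss x) + (9/4) * Ss x) + (|A0| * Cc) * (2 * Ss x) :=
        add_le_add (add_le_add (add_le_add e1 e2) e3) e4
    _ = (117/16 + 2*|A0| * Cc) * Ss x := by ring

lemma cont_qsol : Continuous qsol := by
  have : Differentiable ℝ qsol := fun x => (hqd1 x).differentiableAt
  exact this.continuous

lemma cont_qsol' : Continuous qsol' := by
  have : Differentiable ℝ (fun y => qsol' y) := fun x => (hqd2 x).differentiableAt
  exact this.continuous

lemma deriv_qsol : deriv qsol = qsol' := funext fun x => (hqd1 x).deriv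

lemma deriv_qsol' (x : ℝ) : deriv (deriv qsol) x = qsol'' x := by
  rw [deriv_qsol]
  exact (hqd2 x).deriv

lemma integrable_sq_of_le_S {g : ℝ → ℝ} {K : ℝ} (hc : Continuous g) (hK : 0 ≤ K)
    (h : ∀ x, |g x| ≤ K * Ss x) : Integrable (fun x => (g x)^2) := by
  apply integrable_of_le_exp (hc.pow 2) (K := 2*K^2)
  intro x
  have hS := Ss_pos x
  have h1 : |g x| ≤ K := by
    calc |g x| ≤ K * Ss x := h x
      _ ≤ K * 1 := mul_le_mul_of_nonneg_left (Ss_le_one x) hK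
      _ = K := mul_one K
  calc |(g x)^2| = |g x| * |g x| := by rw [← abs_mul]; ring_nf
    _ ≤ K * (K * Ss x) := mul_le_mul h1 (h x) (abs_nonneg _) hK
    _ = K^2 * Ss x := by ring
    _ ≤ K^2 * (2 * Real.exp (-|x| / Real.sqrt 2)) :=
        mul_le_mul_of_nonneg_left (Ss_le_exp x) (by positivity)
    _ = 2*K^2 * Real.exp (-|x| / Real.sqrt 2) := by ring

noncomputable def sqrt2 : ℝ := Real.sqrt 2
lemma Psol_qsol : Psol qsol := by
  refine ⟨qsol_odd, fun x => (hqd1 x).differentiableAt, ?_, ?_, ?_, ?_⟩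
  · rw [deriv_qsol]
    exact fun x => (hqd2 x).differentiableAt
  · exact integrable_sq_of_le_S cont_qsol
      (by nlinarith [mul_nonneg (abs_nonneg A0) Cc_pos.le] : (0:ℝ) ≤ 3 + |A0| * Cc) qsol_bound
  · rw [deriv_qsol]
    exact integrable_sq_of_le_S cont_qsol'
      (by nlinarith [mul_nonneg (abs_nonneg A0) Cc_pos.le] : (0:ℝ) ≤ 117/16 + 2*|A0| * Cc) qsol'_bound
  · intro x
    have h2 : deriv (deriv qsol) x = qsol'' x := deriv_qsol' x
    have h3 : sech (x / Real.sqrt 2) = Ss x := rfl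
    simp only [Pi.neg_apply, h2, h3]
    exact qsol_ODE x
noncomputable def Zfun (x : ℝ) : ℝ := Ss x^2
noncomputable def Zfun' (x : ℝ) : ℝ := -2*kap*(Tt x*Ss x^2)
noncomputable def Zfun'' (x : ℝ) : ℝ := -2*kap^2*(Ss x^4 - 2*(Tt x^2*Ss x^2))

lemma hZ1 (x : ℝ) : HasDerivAt Zfun (Zfun' x) x := by
  have := (hS2 x).pow 2
  refine this.congr_deriv ?_
  simp only [Zfun']; ring

lemma hZ2 (x : ℝ) : HasDerivAt Zfun' (Zfun'' x) x := by
  have hTS2 : HasDerivAt (fun y => Tt y * Ss y^2)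
      (kap * Ss x^2 * Ss x^2 + Tt x * (2 * Ss x^1 * -(kap * (Tt x * Ss x)))) x :=
    (hT2 x).mul ((hS2 x).pow 2)
  have := hTS2.const_mul (-2*kap)
  refine this.congr_deriv ?_
  simp only [Zfun'']; ring

lemma Z_ODE (x : ℝ) : Zfun'' x = (2 - 3*Ss x^2) * Zfun x := by
  simp only [Zfun'', Zfun]
  linear_combination (-(Ss x^4 - 2*(Tt x^2*Ss x^2))) * hkap2 + (2*Ss x^2) * (hTS x)

lemma Tt_zero : Tt 0 = 0 := by simp [Tt, Real.tanh_zero]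
lemma Ss_zero : Ss 0 = 1 := by simp [Ss, sech, Real.cosh_zero]

lemma abs_Zfun_le (x : ℝ) : |Zfun x| ≤ 1 := by
  simp only [Zfun]
  rw [abs_pow, abs_of_pos (Ss_pos x)]
  exact pow_le_one₀ (Ss_pos x).le (Ss_le_one x)

lemma abs_Zfun'_le (x : ℝ) : |Zfun' x| ≤ 2 := by
  simp only [Zfun']
  have h1 : |(-2)*kap| ≤ 2 := by
    rw [show (-2)*kap = -(2*kap) by ring, abs_neg]
    exact abs_kap_mul (by norm_num)
  have h2 : |Tt x * Ss x^2| ≤ 1 := by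
    have := TS_bound 1 2 x (by norm_num)
    simp only [pow_one] at this
    exact this.trans (Ss_le_one x)
  calc |(-2*kap)*(Tt x*Ss x^2)| ≤ 2 * 1 := abs_mul_le h1 h2
    _ = 2 := by norm_num

lemma uniqueness {q : ℝ → ℝ} (hq : Psol q) : q = qsol := by
  obtain ⟨hodd, hdiff, hdiff', hint, hint', hODE⟩ := hq
  -- the difference w
  set w : ℝ → ℝ := fun x => q x - qsol x with hw
  set w' : ℝ → ℝ := fun x => deriv q x - qsol' x with hw'
  set w'' : ℝ → ℝ := fun x => deriv (deriv q) x - qsol'' x with hw''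
  have hw1 : ∀ x, HasDerivAt w (w' x) x := fun x =>
    ((hdiff x).hasDerivAt).sub (hqd1 x)
  have hw2 : ∀ x, HasDerivAt w' (w'' x) x := fun x =>
    ((hdiff' x).hasDerivAt).sub (hqd2 x)
  have hcw : Continuous w := hdiff.continuous.sub cont_qsol
  have hcw' : Continuous w' := hdiff'.continuous.sub cont_qsol'
  -- the ODE for w
  have hwODE : ∀ x, w'' x = (2 - 3*Ss x^2) * w x := by
    intro x
    have h1 := hODE x
    have h3 : sech (x / Real.sqrt 2) = Ss x := rfl
    simp only [Pi.neg_apply, h3] at h1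
    have h2 := qsol_ODE x
    simp only [hw'', hw]
    nlinarith [h1, h2]
  -- w is odd, hence w 0 = 0
  have hwodd0 : w 0 = 0 := by
    have h1 := hodd 0
    have h2 := qsol_odd 0
    simp only [neg_zero] at h1 h2
    simp only [hw]
    linarith
  -- the Wronskian with Z
  set ρ : ℝ → ℝ := fun x => w' x * Zfun x - w x * Zfun' x with hρdef
  have hρ : ∀ x, HasDerivAt ρ 0 x := by
    intro x
    have h := ((hw2 x).mul (hZ1 x)).sub ((hw1 x).mul (hZ2 x))
    refine h.congr_deriv ?_
    rw [hwODE x, Z_ODE x]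
    simp only [Zfun]
    ring
  have hρconst : ∀ x, ρ x = ρ 0 := by
    intro x
    exact is_const_of_deriv_eq_zero (fun y => (hρ y).differentiableAt)
      (fun y => (hρ y).deriv) x 0
  have hρ0 : ρ 0 = w' 0 := by
    simp only [hρdef, Zfun, Zfun', Tt_zero, Ss_zero, hwodd0]
    ring
  -- show ρ 0 = 0 using integrability
  have hwsq : Integrable (fun x => (w x)^2) := by
    have hqq : Integrable (fun x => (q x * qsol x)) := by
      apply Integrable.mono ((hint.add (integrable_sq_of_le_S cont_qsol
        (by nlinarith [mul_nonneg (abs_nonneg A0) Cc_pos.le] : (0:ℝ) ≤ 3 + |A0| * Cc)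
        qsol_bound)).const_mul (1/2 : ℝ))
        ((hdiff.continuous.mul cont_qsol).aestronglyMeasurable)
      filter_upwards with x
      simp only [Pi.add_apply, Pi.mul_apply]
      rw [Real.norm_eq_abs, Real.norm_eq_abs]
      rw [abs_of_nonneg (by positivity : (0:ℝ) ≤ 1/2 * ((q x)^2 + (qsol x)^2))]
      rw [abs_mul]
      nlinarith [sq_nonneg (|q x| - |qsol x|), sq_abs (q x), sq_abs (qsol x), abs_nonneg (q x), abs_nonneg (qsol x)]
    have heq : (fun x => (w x)^2) = fun x => (q x)^2 - 2*(q x * qsol x) + (qsol x)^2 := by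
      funext x; simp only [hw]; ring
    rw [heq]
    exact (hint.sub (hqq.const_mul 2)).add (integrable_sq_of_le_S cont_qsol
      (by nlinarith [mul_nonneg (abs_nonneg A0) Cc_pos.le] : (0:ℝ) ≤ 3 + |A0| * Cc) qsol_bound)
  have hw'sq : Integrable (fun x => (w' x)^2) := by
    have hqq : Integrable (fun x => (deriv q x * qsol' x)) := by
      apply Integrable.mono ((hint'.add (integrable_sq_of_le_S cont_qsol'
        (by nlinarith [mul_nonneg (abs_nonneg A0) Cc_pos.le] : (0:ℝ) ≤ 117/16 + 2*|A0| * Cc)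
        qsol'_bound)).const_mul (1/2 : ℝ))
        ((hdiff'.continuous.mul cont_qsol').aestronglyMeasurable)
      filter_upwards with x
      simp only [Pi.add_apply, Pi.mul_apply]
      rw [Real.norm_eq_abs, Real.norm_eq_abs]
      rw [abs_of_nonneg (by positivity : (0:ℝ) ≤ 1/2 * ((deriv q x)^2 + (qsol' x)^2))]
      rw [abs_mul]
      nlinarith [sq_nonneg (|deriv q x| - |qsol' x|), sq_abs (deriv q x), sq_abs (qsol' x),
        abs_nonneg (deriv q x), abs_nonneg (qsol' x)]
    have heq : (fun x => (w' x)^2) = fun x => (deriv q x)^2 - 2*(deriv q x * qsol' x) + (qsol' x)^2 := by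
      funext x; simp only [hw']; ring
    rw [heq]
    exact (hint'.sub (hqq.const_mul 2)).add (integrable_sq_of_le_S cont_qsol'
      (by nlinarith [mul_nonneg (abs_nonneg A0) Cc_pos.le] : (0:ℝ) ≤ 117/16 + 2*|A0| * Cc) qsol'_bound)
  have hρ00 : ρ 0 = 0 := by
    by_contra hne
    have hbound : ∀ x, (ρ 0)^2 ≤ 2*(w' x)^2 + 8*(w x)^2 := by
      intro x
      rw [← hρconst x]
      have h1 : |ρ x| ≤ |w' x| + 2*|w x| := by
        simp only [hρdef]
        calc |w' x * Zfun x - w x * Zfun' x| ≤ |w' x * Zfun x| + |w x * Zfun' x| := abs_sub _ _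
          _ ≤ |w' x| * 1 + |w x| * 2 := by
              apply add_le_add
              · rw [abs_mul]
                exact mul_le_mul_of_nonneg_left (abs_Zfun_le x) (abs_nonneg _)
              · rw [abs_mul]
                exact mul_le_mul_of_nonneg_left (abs_Zfun'_le x) (abs_nonneg _)
          _ = |w' x| + 2*|w x| := by ring
      nlinarith [sq_abs (ρ x), sq_abs (w' x), sq_abs (w x), abs_nonneg (ρ x),
        abs_nonneg (w' x), abs_nonneg (w x), sq_nonneg (|w' x| - 2*|w x|)]
    have hconst_int : Integrable (fun _ : ℝ => (ρ 0)^2) := by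
      apply Integrable.mono ((hw'sq.const_mul 2).add (hwsq.const_mul 8))
        aestronglyMeasurable_const
      filter_upwards with x
      simp only [Pi.add_apply]
      rw [Real.norm_eq_abs, Real.norm_eq_abs, abs_of_nonneg (sq_nonneg _),
        abs_of_nonneg (by positivity : (0:ℝ) ≤ 2*(w' x)^2 + 8*(w x)^2)]
      exact hbound x
    rcases integrable_const_iff.mp hconst_int with h | h
    · exact hne (pow_eq_zero_iff (by norm_num) |>.mp h)
    · haveI := h
      have h' : volume (univ : Set ℝ) < ⊤ := measure_lt_top _ _
      rw [Real.volume_univ] at h'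
      exact (lt_irrefl _ h').elim
  have hw'0 : w' 0 = 0 := by rw [← hρ0, hρ00]
  -- Gronwall argument: m = w² + w'²
  set m : ℝ → ℝ := fun x => (w x)^2 + (w' x)^2 with hm
  have hm0 : m 0 = 0 := by simp [hm, hwodd0, hw'0]
  have hmderiv : ∀ x, HasDerivAt m (2*w x*w' x + 2*w' x*w'' x) x := by
    intro x
    have := ((hw1 x).pow 2).add ((hw2 x).pow 2)
    refine this.congr_deriv ?_
    ring
  have hmbound : ∀ x, |2*w x*w' x + 2*w' x*w'' x| ≤ 3 * m x := by
    intro x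
    rw [hwODE x]
    have hs1 := Ss_le_one x
    have hs0 := (Ss_pos x).le
    simp only [hm]
    have hs2 : 0 ≤ 3 - 3*Ss x^2 := by nlinarith
    rw [abs_le]
    constructor
    · nlinarith [mul_nonneg hs2 (sq_nonneg (w x + w' x)),
        mul_nonneg (sq_nonneg (Ss x)) (sq_nonneg (w x)),
        mul_nonneg (sq_nonneg (Ss x)) (sq_nonneg (w' x))]
    · nlinarith [mul_nonneg hs2 (sq_nonneg (w x - w' x)),
        mul_nonneg (sq_nonneg (Ss x)) (sq_nonneg (w x)),
        mul_nonneg (sq_nonneg (Ss x)) (sq_nonneg (w' x))]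
  have hmnonneg : ∀ x, 0 ≤ m x := fun x => by positivity
  have hmzero : ∀ x, m x = 0 := by
    intro x
    rcases le_or_gt 0 x with hx | hx
    · -- use g₊ = m * exp(-3x), antitone
      set g : ℝ → ℝ := fun y => m y * Real.exp (-3*y) with hg
      have hgd : ∀ y, HasDerivAt g
          ((2*w y*w' y + 2*w' y*w'' y) * Real.exp (-3*y) + m y * (Real.exp (-3*y) * (-3))) y := by
        intro y
        have hE : HasDerivAt (fun z : ℝ => Real.exp (-3*z)) (Real.exp (-3*y)*(-3)) y := by
          simpa using (((hasDerivAt_id y).const_mul (-3)).exp)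
        exact (hmderiv y).mul hE
      have hanti : Antitone g := by
        apply antitone_of_deriv_nonpos (fun y => (hgd y).differentiableAt)
        intro y
        rw [(hgd y).deriv]
        have h1 := hmbound y
        have h2 := Real.exp_pos (-3*y)
        nlinarith [abs_nonneg (2*w y*w' y + 2*w' y*w'' y), le_abs_self (2*w y*w' y + 2*w' y*w'' y)]
      have h1 : g x ≤ g 0 := hanti hx
      have h2 : g 0 = 0 := by simp [hg, hm0]
      have h3 : 0 ≤ g x := mul_nonneg (hmnonneg x) (Real.exp_pos _).le
      have h4 : g x = 0 := le_antisymm (h1.trans_eq h2) h3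
      have h5 := Real.exp_pos (-3*x)
      simp only [hg] at h4
      rcases mul_eq_zero.mp h4 with h | h
      · exact h
      · exact absurd h (ne_of_gt h5)
    · -- use g₋ = m * exp(3x), monotone
      set g : ℝ → ℝ := fun y => m y * Real.exp (3*y) with hg
      have hgd : ∀ y, HasDerivAt g
          ((2*w y*w' y + 2*w' y*w'' y) * Real.exp (3*y) + m y * (Real.exp (3*y) * 3)) y := by
        intro y
        have hE : HasDerivAt (fun z : ℝ => Real.exp (3*z)) (Real.exp (3*y)*3) y := by
          simpa using (((hasDerivAt_id y).const_mul 3).exp)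
        exact (hmderiv y).mul hE
      have hmono : Monotone g := by
        apply monotone_of_deriv_nonneg (fun y => (hgd y).differentiableAt)
        intro y
        rw [(hgd y).deriv]
        have h1 := hmbound y
        have h2 := Real.exp_pos (3*y)
        nlinarith [abs_nonneg (2*w y*w' y + 2*w' y*w'' y), neg_abs_le (2*w y*w' y + 2*w' y*w'' y)]
      have h1 : g x ≤ g 0 := hmono hx.le
      have h2 : g 0 = 0 := by simp [hg, hm0]
      have h3 : 0 ≤ g x := mul_nonneg (hmnonneg x) (Real.exp_pos _).le
      have h4 : g x = 0 := le_antisymm (h1.trans_eq h2) h3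
      have h5 := Real.exp_pos (3*x)
      simp only [hg] at h4
      rcases mul_eq_zero.mp h4 with h | h
      · exact h
      · exact absurd h (ne_of_gt h5)
  funext x
  have h := hmzero x
  simp only [hm] at h
  have h1 : (w x)^2 = 0 := by nlinarith [sq_nonneg (w x), sq_nonneg (w' x)]
  have h2 : w x = 0 := by
    have := sq_eq_zero_iff.mp h1
    exact this
  simp only [hw] at h2
  linarith
lemma int_fsrc_Y1 : (∫ x : ℝ, fsrc x * Y1 x) = 0 := by
  have heq : (fun x => fsrc x * Y1 x) = fun x => (3/2)*(Hkink x * Y1 x^3) - ((3/2)*A0)*(Y1 x^2) := by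
    funext x
    have h : fsrc x = (3/2) * (Hkink x * (Y1 x)^2 - A0 * Y1 x) := rfl
    rw [h]; ring
  rw [heq, integral_sub (integrable_HY13.const_mul _) (integrable_Y1sq.const_mul _),
    MeasureTheory.integral_const_mul, MeasureTheory.integral_const_mul, int_Y1sq]
  have hA : (∫ x : ℝ, Hkink x * Y1 x ^ 3) = A0 := rfl
  rw [hA]; ring

lemma ACc_nonneg : 0 ≤ |A0| * Cc := mul_nonneg (abs_nonneg A0) Cc_pos.le

lemma decay_combine {u1 u2 K1 K2 : ℝ} (x : ℝ) (hK1 : 0 ≤ K1) (hK2 : 0 ≤ K2)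
    (h1 : |u1| ≤ K1 * Ss x) (h2 : |u2| ≤ K2 * Ss x) :
    |u1| + |u2| ≤ (2*(K1+K2)+1) * Real.exp (-|x| / Real.sqrt 2) := by
  have hS := Ss_le_exp x
  have hE := Real.exp_pos (-|x| / Real.sqrt 2)
  have h3 : |u1| + |u2| ≤ (K1 + K2) * Ss x := by
    calc |u1| + |u2| ≤ K1 * Ss x + K2 * Ss x := add_le_add h1 h2
      _ = (K1 + K2) * Ss x := by ring
  calc |u1| + |u2| ≤ (K1 + K2) * Ss x := h3
    _ ≤ (K1 + K2) * (2 * Real.exp (-|x| / Real.sqrt 2)) :=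
        mul_le_mul_of_nonneg_left hS (by linarith)
    _ ≤ (2*(K1+K2)+1) * Real.exp (-|x| / Real.sqrt 2) := by nlinarith

theorem properties_of_f_and_q :
    (∀ x : ℝ, fsrc (-x) = -fsrc x) ∧
    (∫ x : ℝ, fsrc x * Y1 x) = 0 ∧
    (∃ C > 0, ∀ x : ℝ,
      |fsrc x| + |deriv fsrc x| ≤ C * Real.exp (-|x| / Real.sqrt 2)) ∧
    (∃! q : ℝ → ℝ, Psol q) ∧
    (∀ q : ℝ → ℝ, Psol q →
      ∃ C' > 0, ∀ x : ℝ, |q x| + |deriv q x| ≤ C' * Real.exp (-|x| / Real.sqrt 2)) := by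
  refine ⟨fsrc_odd, int_fsrc_Y1, ?_, ?_, ?_⟩
  · -- decay of fsrc
    refine ⟨2*(((3/2)*Cc^2 + (3/2)*|A0| * Cc) + ((15/2)*Cc^2 + 3*|A0| * Cc))+1, ?_, ?_⟩
    · nlinarith [ACc_nonneg, sq_nonneg Cc]
    · intro x
      rw [deriv_fsrc]
      exact decay_combine x
        (by nlinarith [ACc_nonneg, sq_nonneg Cc]) (by nlinarith [ACc_nonneg, sq_nonneg Cc])
        (fsrc_bound x) (fsrc'_bound x)
  · exact ⟨qsol, Psol_qsol, fun q hq => uniqueness hq⟩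
  · intro q hq
    have hEq : q = qsol := uniqueness hq
    subst hEq
    refine ⟨2*((3 + |A0| * Cc) + (117/16 + 2*|A0| * Cc))+1, ?_, ?_⟩
    · nlinarith [ACc_nonneg]
    · intro x
      rw [deriv_qsol]
      exact decay_combine x (by nlinarith [ACc_nonneg]) (by nlinarith [ACc_nonneg])
        (qsol_bound x) (qsol'_bound x)
end

section
/- For every λ₀ > 0 and every odd differentiable function w : ℝ → ℝ with w and w' square integrable on ℝ, one has ∫_ℝ w'(x)² dx - (1/λ₀²)·∫_ℝ sech²(x/(λ₀·√2))·w(x)² dx ≥ 0. -/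
open MeasureTheory Set Filter Topology intervalIntegral

namespace SechAux

noncomputable def rho (a x : ℝ) : ℝ := 1 / (a * (Real.sinh (x / a) * Real.cosh (x / a)))

lemma rho_pos {a x : ℝ} (ha : 0 < a) (hx : 0 < x) : 0 < rho a x := by
  have h1 : 0 < Real.sinh (x / a) := Real.sinh_pos_iff.2 (div_pos hx ha)
  have h2 : 0 < Real.cosh (x / a) := Real.cosh_pos _
  unfold rho; positivity

lemma hasDerivAt_rho {a x : ℝ} (ha : 0 < a) (hx : 0 < x) :
    HasDerivAt (rho a) (-(2 / a ^ 2) * sech (x / a) ^ 2 - rho a x ^ 2) x := by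
  have hs : 0 < Real.sinh (x / a) := Real.sinh_pos_iff.2 (div_pos hx ha)
  have hc : 0 < Real.cosh (x / a) := Real.cosh_pos _
  have hu : HasDerivAt (fun y : ℝ => y / a) (1 / a) x := by
    simpa using (hasDerivAt_id x).div_const a
  have hS : HasDerivAt (fun y : ℝ => Real.sinh (y / a)) (Real.cosh (x / a) * (1 / a)) x :=
    by have := (Real.hasDerivAt_sinh (x / a)).comp x hu; exact this
  have hC : HasDerivAt (fun y : ℝ => Real.cosh (y / a)) (Real.sinh (x / a) * (1 / a)) x :=
    by have := (Real.hasDerivAt_cosh (x / a)).comp x hu; exact this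
  have hD : HasDerivAt (fun y : ℝ => a * (Real.sinh (y / a) * Real.cosh (y / a)))
      (a * (Real.cosh (x / a) * (1 / a) * Real.cosh (x / a)
        + Real.sinh (x / a) * (Real.sinh (x / a) * (1 / a)))) x :=
    (hS.mul hC).const_mul a
  have hDne : a * (Real.sinh (x / a) * Real.cosh (x / a)) ≠ 0 := by positivity
  have h := (hasDerivAt_const x (1:ℝ)).div hD hDne
  refine h.congr_deriv (Eq.symm ?_)
  have hcs : Real.cosh (x / a) ^ 2 = 1 + Real.sinh (x / a) ^ 2 := by simpa [add_comm] using Real.cosh_sq (x / a)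
  unfold rho sech
  rw [div_eq_mul_inv] at hcs
  field_simp
  ring_nf
  linear_combination hcs


lemma sech_sq_le_one (x : ℝ) : sech x ^ 2 ≤ 1 := by
  have h1 : (1:ℝ) ≤ Real.cosh x := Real.one_le_cosh x
  have h2 : 0 < Real.cosh x := Real.cosh_pos x
  unfold sech
  rw [div_pow, one_pow, div_le_one (by positivity)]
  nlinarith

lemma sech_sq_nonneg (x : ℝ) : 0 ≤ sech x ^ 2 := sq_nonneg _

lemma continuous_sech : Continuous sech :=
  continuous_const.div Real.continuous_cosh (fun x => (Real.cosh_pos x).ne')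

lemma abs_le_half_one_add_sq (t : ℝ) : ‖t‖ ≤ (1 + t ^ 2) / 2 := by
  rw [Real.norm_eq_abs]
  nlinarith [sq_nonneg (|t| - 1), sq_abs t]

lemma boundary_tendsto {a : ℝ} (ha : 0 < a) (w : ℝ → ℝ) (hw0 : w 0 = 0)
    (hdiff : Differentiable ℝ w) :
    Tendsto (fun e => rho a e * w e ^ 2) (𝓝[>] (0:ℝ)) (𝓝 0) := by
  -- sinh u / u → 1
  have hsl : Tendsto (fun u : ℝ => Real.sinh u / u) (𝓝[≠] (0:ℝ)) (𝓝 1) := by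
    have h := hasDerivAt_iff_tendsto_slope.1 (Real.hasDerivAt_sinh 0)
    rw [Real.cosh_zero] at h
    refine h.congr (fun u => ?_)
    rw [slope_def_field, Real.sinh_zero, sub_zero, sub_zero]
  have hsl' : Tendsto (fun u : ℝ => u / Real.sinh u) (𝓝[≠] (0:ℝ)) (𝓝 1) := by
    have h := hsl.inv₀ one_ne_zero
    rw [inv_one] at h
    refine h.congr (fun u => ?_)
    rw [inv_div]
  -- w e / e → deriv w 0
  have hwsl : Tendsto (fun e : ℝ => w e / e) (𝓝[≠] (0:ℝ)) (𝓝 (deriv w 0)) := by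
    have h := hasDerivAt_iff_tendsto_slope.1 (hdiff 0).hasDerivAt
    refine h.congr (fun u => ?_)
    rw [slope_def_field, hw0, sub_zero, sub_zero]
  -- the map e ↦ e / a into punctured nhds
  have hmap : Tendsto (fun e : ℝ => e / a) (𝓝[>] (0:ℝ)) (𝓝[≠] (0:ℝ)) := by
    rw [tendsto_nhdsWithin_iff]
    constructor
    · have : Tendsto (fun e : ℝ => e / a) (𝓝 (0:ℝ)) (𝓝 (0 / a)) :=
        (continuous_id.div_const a).tendsto 0
      rw [zero_div] at this
      exact this.mono_left nhdsWithin_le_nhds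
    · filter_upwards [self_mem_nhdsWithin] with e he
      exact (div_pos he ha).ne'
  have hmap' : Tendsto (fun e : ℝ => e) (𝓝[>] (0:ℝ)) (𝓝[≠] (0:ℝ)) := by
    rw [tendsto_nhdsWithin_iff]
    exact ⟨tendsto_id.mono_left nhdsWithin_le_nhds,
      by filter_upwards [self_mem_nhdsWithin] with e he; exact he.ne'⟩
  have T1 : Tendsto (fun e : ℝ => (e / a) / Real.sinh (e / a)) (𝓝[>] (0:ℝ)) (𝓝 1) :=
    hsl'.comp hmap
  have T2 : Tendsto (fun e : ℝ => (e / a) / Real.cosh (e / a)) (𝓝[>] (0:ℝ)) (𝓝 0) := by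
    have hc : Continuous (fun u : ℝ => u / Real.cosh u) :=
      continuous_id.div Real.continuous_cosh (fun x => (Real.cosh_pos x).ne')
    have : Tendsto (fun e : ℝ => e / a) (𝓝[>] (0:ℝ)) (𝓝 (0:ℝ)) := by
      have : Tendsto (fun e : ℝ => e / a) (𝓝 (0:ℝ)) (𝓝 (0 / a)) :=
        (continuous_id.div_const a).tendsto 0
      rw [zero_div] at this
      exact this.mono_left nhdsWithin_le_nhds
    have h := (hc.tendsto 0).comp this
    simpa [Function.comp_def] using h
  have T3 : Tendsto (fun e : ℝ => w e / e) (𝓝[>] (0:ℝ)) (𝓝 (deriv w 0)) :=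
    hwsl.comp hmap'
  have Tall : Tendsto (fun e : ℝ =>
      a * ((e / a) / Real.sinh (e / a)) * ((e / a) / Real.cosh (e / a)) * (w e / e) ^ 2)
      (𝓝[>] (0:ℝ)) (𝓝 (a * 1 * 0 * (deriv w 0) ^ 2)) :=
    (((tendsto_const_nhds.mul T1).mul T2).mul (T3.pow 2))
  rw [show a * 1 * 0 * (deriv w 0) ^ 2 = 0 by ring] at Tall
  refine Tall.congr' ?_
  filter_upwards [self_mem_nhdsWithin] with e he
  have he0 : (0:ℝ) < e := he
  have hs : 0 < Real.sinh (e / a) := Real.sinh_pos_iff.2 (div_pos he0 ha)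
  have hc : 0 < Real.cosh (e / a) := Real.cosh_pos _
  unfold rho
  field_simp

lemma halfline {a : ℝ} (ha : 0 < a) (w : ℝ → ℝ) (hw0 : w 0 = 0)
    (hdiff : Differentiable ℝ w)
    (hw2 : Integrable (fun x => (w x) ^ 2))
    (hw'2 : Integrable (fun x => (deriv w x) ^ 2)) :
    (2 / a ^ 2) * (∫ x in Ioi (0:ℝ), sech (x / a) ^ 2 * w x ^ 2)
      ≤ ∫ x in Ioi (0:ℝ), (deriv w x) ^ 2 := by
  have hcw : Continuous w := hdiff.continuous
  have hVcont : Continuous (fun x => sech (x / a) ^ 2) :=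
    (continuous_sech.comp (continuous_id.div_const a)).pow 2
  have hVw2 : Integrable (fun x => sech (x / a) ^ 2 * w x ^ 2) := by
    refine hw2.mono' (hVcont.mul (hcw.pow 2)).aestronglyMeasurable ?_
    filter_upwards with x
    have h1 := sech_sq_le_one (x / a)
    have h0 := sech_sq_nonneg (x / a)
    have hwx : (0:ℝ) ≤ w x ^ 2 := sq_nonneg _
    rw [Real.norm_eq_abs, abs_of_nonneg (by positivity)]
    nlinarith
  set E : ℝ := ∫ x in Ioi (0:ℝ), (deriv w x) ^ 2 with hE_def
  -- the key inequality for each ε > 0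
  have KEY : ∀ ε : ℝ, 0 < ε →
      (2 / a ^ 2) * (∫ x in Ioi ε, sech (x / a) ^ 2 * w x ^ 2)
        ≤ E + rho a ε * w ε ^ 2 := by
    intro ε hε
    have step : ∀ R : ℝ, ε ≤ R →
        (2 / a ^ 2) * (∫ x in ε..R, sech (x / a) ^ 2 * w x ^ 2)
          ≤ E + rho a ε * w ε ^ 2 := by
      intro R hR
      have huIcc : uIcc ε R = Icc ε R := uIcc_of_le hR
      have hpos : ∀ x ∈ uIcc ε R, (0:ℝ) < x := by
        rw [huIcc]; intro x hx; exact lt_of_lt_of_le hε hx.1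
      set g : ℝ → ℝ := fun x =>
        (-(2 / a ^ 2) * sech (x / a) ^ 2 - rho a x ^ 2) * w x ^ 2
          + (rho a x * (2 * w x)) * deriv w x with hg_def
      set Q : ℝ → ℝ := fun x =>
        deriv w x ^ 2 + ((-2 : ℝ) * (rho a x * w x)) * deriv w x
          + rho a x ^ 2 * w x ^ 2 with hQ_def
      have hF : ∀ x ∈ uIcc ε R, HasDerivAt (fun y => rho a y * w y ^ 2) (g x) x := by
        intro x hx
        have h1 := hasDerivAt_rho ha (hpos x hx)
        have h2 := ((hdiff x).hasDerivAt).pow 2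
        have h3 := h1.mul h2
        refine h3.congr_deriv (Eq.symm ?_)
        simp only [hg_def, Pi.pow_apply]
        push_cast
        ring
      have hInt_w' : IntervalIntegrable (deriv w) volume ε R := by
        rw [intervalIntegrable_iff]
        refine Integrable.mono' (g := fun x => (1 + deriv w x ^ 2) / 2)
          ?_ ((measurable_deriv w).aestronglyMeasurable.restrict) ?_
        · exact ((integrableOn_const measure_Ioc_lt_top.ne).add
            hw'2.integrableOn).div_const 2
        · filter_upwards with x; exact abs_le_half_one_add_sq _
      have hρcont : ContinuousOn (rho a) (uIcc ε R) := fun x hx =>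
        ((hasDerivAt_rho ha (hpos x hx)).continuousAt).continuousWithinAt
      have hIg : IntervalIntegrable g volume ε R := by
        refine IntervalIntegrable.add ?_ ?_
        · refine ContinuousOn.intervalIntegrable ?_
          exact (((continuousOn_const.mul hVcont.continuousOn)).sub (hρcont.pow 2)).mul
            ((hcw.pow 2).continuousOn)
        · exact hInt_w'.continuousOn_mul
            (hρcont.mul (continuousOn_const.mul hcw.continuousOn))
      have hFTC : (∫ x in ε..R, g x) = rho a R * w R ^ 2 - rho a ε * w ε ^ 2 :=
        integral_eq_sub_of_hasDerivAt hF hIg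
      have hQint : IntervalIntegrable Q volume ε R := by
        refine IntervalIntegrable.add (IntervalIntegrable.add ?_ ?_) ?_
        · exact hw'2.intervalIntegrable
        · exact hInt_w'.continuousOn_mul
            (continuousOn_const.mul (hρcont.mul hcw.continuousOn))
        · exact ContinuousOn.intervalIntegrable
            ((hρcont.pow 2).mul ((hcw.pow 2).continuousOn))
      have hQnonneg : 0 ≤ ∫ x in ε..R, Q x := by
        refine intervalIntegral.integral_nonneg hR (fun x hx => ?_)
        simp only [hQ_def]
        nlinarith [sq_nonneg (deriv w x - rho a x * w x)]
      have hsplit : (∫ x in ε..R, (deriv w x ^ 2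
            - (2 / a ^ 2) * (sech (x / a) ^ 2 * w x ^ 2)))
          = (∫ x in ε..R, Q x) + ∫ x in ε..R, g x := by
        rw [← intervalIntegral.integral_add hQint hIg]
        refine intervalIntegral.integral_congr (fun x hx => ?_)
        simp only [hQ_def, hg_def]
        ring
      have hLHSsplit : (∫ x in ε..R, (deriv w x ^ 2
            - (2 / a ^ 2) * (sech (x / a) ^ 2 * w x ^ 2)))
          = (∫ x in ε..R, deriv w x ^ 2)
            - (2 / a ^ 2) * ∫ x in ε..R, sech (x / a) ^ 2 * w x ^ 2 := by
        rw [intervalIntegral.integral_sub hw'2.intervalIntegrable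
          ((hVw2.intervalIntegrable).const_mul (2 / a ^ 2)),
          intervalIntegral.integral_const_mul]
      have hρR : 0 ≤ rho a R * w R ^ 2 :=
        mul_nonneg (rho_pos ha (lt_of_lt_of_le hε hR)).le (sq_nonneg _)
      have hIw'le : (∫ x in ε..R, deriv w x ^ 2) ≤ E := by
        rw [intervalIntegral.integral_of_le hR, hE_def]
        refine setIntegral_mono_set hw'2.integrableOn ?_ ?_
        · filter_upwards with x; exact sq_nonneg _
        · exact HasSubset.Subset.eventuallyLE (fun x hx => lt_trans hε hx.1)
      linarith [hsplit, hLHSsplit, hFTC, hQnonneg, hρR, hIw'le]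
    have hT : Tendsto (fun R => ∫ x in ε..R, sech (x / a) ^ 2 * w x ^ 2) atTop
        (𝓝 (∫ x in Ioi ε, sech (x / a) ^ 2 * w x ^ 2)) :=
      intervalIntegral_tendsto_integral_Ioi ε hVw2.integrableOn tendsto_id
    refine le_of_tendsto (hT.const_mul (2 / a ^ 2)) ?_
    filter_upwards [eventually_ge_atTop ε] with R hR
    exact step R hR
  -- pass to the limit ε → 0⁺ along the sequence 1/(n+1)
  have hu_pos : ∀ n : ℕ, (0:ℝ) < 1 / (n + 1) := fun n => by positivity
  have hseq : Tendsto (fun n : ℕ => (1:ℝ) / (n + 1)) atTop (𝓝[>] (0:ℝ)) := by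
    rw [tendsto_nhdsWithin_iff]
    exact ⟨tendsto_one_div_add_atTop_nhds_zero_nat,
      Eventually.of_forall (fun n => hu_pos n)⟩
  have hB : Tendsto (fun n : ℕ => rho a ((1:ℝ) / (n + 1)) * w ((1:ℝ) / (n + 1)) ^ 2)
      atTop (𝓝 0) := (boundary_tendsto ha w hw0 hdiff).comp hseq
  have hU : (⋃ n : ℕ, Ioi ((1:ℝ) / (n + 1))) = Ioi (0:ℝ) := by
    ext x
    simp only [mem_iUnion, mem_Ioi]
    constructor
    · rintro ⟨n, h⟩; exact (hu_pos n).trans h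
    · intro hx; exact exists_nat_one_div_lt hx
  have hA : Tendsto (fun n : ℕ => ∫ x in Ioi ((1:ℝ) / (n + 1)), sech (x / a) ^ 2 * w x ^ 2)
      atTop (𝓝 (∫ x in Ioi (0:ℝ), sech (x / a) ^ 2 * w x ^ 2)) := by
    have hmono : Monotone (fun n : ℕ => Ioi ((1:ℝ) / (n + 1))) := by
      intro n m hnm
      refine Ioi_subset_Ioi ?_
      refine one_div_le_one_div_of_le (by positivity) ?_
      linarith [(Nat.cast_le (α := ℝ)).2 hnm]
    have h := tendsto_setIntegral_of_monotone (fun n : ℕ => measurableSet_Ioi) hmono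
      (by rw [hU]; exact hVw2.integrableOn)
    rwa [hU] at h
  have hfinal := le_of_tendsto_of_tendsto' (hA.const_mul (2 / a ^ 2))
    (tendsto_const_nhds.add hB) (fun n => KEY _ (hu_pos n))
  simpa using hfinal

end SechAux

theorem nonnegativity_on_odd_functions
    (lam : ℝ) (hlam : lam > 0)
    (w : ℝ → ℝ) (hodd : ∀ x : ℝ, w (-x) = -w x)
    (hdiff : Differentiable ℝ w)
    (hw2 : Integrable (fun x => (w x) ^ 2))
    (hw'2 : Integrable (fun x => (deriv w x) ^ 2)) :
    (∫ x : ℝ, (deriv w x) ^ 2)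
      - (1 / lam ^ 2) * (∫ x : ℝ, sech (x / (lam * Real.sqrt 2)) ^ 2 * (w x) ^ 2) ≥ 0 := by
  have hs2 : (0:ℝ) < Real.sqrt 2 := Real.sqrt_pos.2 (by norm_num)
  set a : ℝ := lam * Real.sqrt 2 with ha_def
  have ha : 0 < a := mul_pos hlam hs2
  have ha2 : a ^ 2 = 2 * lam ^ 2 := by
    rw [ha_def, mul_pow, Real.sq_sqrt (by norm_num : (2:ℝ) ≥ 0)]; ring
  have hw0 : w 0 = 0 := by have h := hodd 0; rw [neg_zero] at h; linarith
  have hcw : Continuous w := hdiff.continuous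
  -- evenness of the two integrands
  have hderiv_even : ∀ x : ℝ, deriv w (-x) = deriv w x := by
    intro x
    have hfun : w = fun y => -w (-y) := by
      funext y
      have := hodd (-y); rw [neg_neg] at this; linarith
    conv_rhs => rw [hfun]
    rw [deriv.fun_neg, deriv_comp_neg]
    ring
  -- integrability of the potential term
  have hVw2 : Integrable (fun x => sech (x / a) ^ 2 * w x ^ 2) := by
    refine hw2.mono' ?_ ?_
    · exact (((SechAux.continuous_sech.comp (continuous_id.div_const a)).pow 2).mul
        (hcw.pow 2)).aestronglyMeasurable
    · filter_upwards with x
      have h1 := SechAux.sech_sq_le_one (x / a)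
      have h0 := SechAux.sech_sq_nonneg (x / a)
      have hw : (0:ℝ) ≤ w x ^ 2 := sq_nonneg _
      rw [Real.norm_eq_abs, abs_of_nonneg (by positivity)]
      nlinarith
  -- reduce to half line
  have heven_int : ∀ g : ℝ → ℝ, Integrable g → (∀ x, g (-x) = g x) →
      (∫ x : ℝ, g x) = 2 * ∫ x in Ioi (0:ℝ), g x := by
    intro g hg hge
    have h1 : (∫ x in Iic (0:ℝ), g x) = ∫ x in Ioi (0:ℝ), g x := by
      rw [← neg_zero, ← integral_comp_neg_Iic, neg_zero]
      exact setIntegral_congr_fun measurableSet_Iic (fun x _ => (hge x).symm)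
    rw [← integral_Iic_add_Ioi (b := (0:ℝ)) hg.integrableOn hg.integrableOn, h1]
    ring
  have h1 := heven_int _ hw'2 (fun x => by rw [hderiv_even x])
  have h2 := heven_int _ hVw2 (fun x => by
    have : sech (-x / a) = sech (x / a) := by
      unfold sech; rw [neg_div, Real.cosh_neg]
    rw [this, hodd x]; ring)
  rw [h1, h2]
  have hkey := SechAux.halfline ha w hw0 hdiff hw2 hw'2
  have hca : 2 / a ^ 2 = 1 / lam ^ 2 := by
    rw [ha2]; field_simp
  rw [hca] at hkey
  nlinarith [hkey]
end

section
/- There exists a constant C > 0 with the following property: for every odd differentiable function v : ℝ → ℝ such that the function w(x) = sech(x/(8√2))·v(x) and its derivative w' are square integrable on ℝ, one has ∫_ℝ ( v'(x)² + v(x)² )·sech(x/(2√2)) dx ≤ C·∫_ℝ w'(x)² dx. -/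
open MeasureTheory

lemma sech_pos (x : ℝ) : 0 < sech x := one_div_pos.mpr (Real.cosh_pos x)

lemma sech_le_one (x : ℝ) : sech x ≤ 1 := by
  rw [sech, div_le_one (Real.cosh_pos x)]; exact Real.one_le_cosh x

lemma cosh_pow_four_le (t : ℝ) : Real.cosh t ^ 4 ≤ Real.cosh (4 * t) := by
  have h4 : (4 : ℝ) * t = 2 * (2 * t) := by ring
  rw [h4, Real.cosh_two_mul, Real.cosh_two_mul, Real.sinh_two_mul]
  nlinarith [sq_nonneg (Real.sinh t), sq_nonneg (Real.cosh t * Real.sinh t),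
    Real.one_le_cosh t, sq_nonneg (Real.cosh t ^ 2 - 1)]

lemma sech_four_mul (t : ℝ) : sech (4 * t) ≤ sech t ^ 4 := by
  rw [sech, sech, div_pow, one_pow]
  exact one_div_le_one_div_of_le (by positivity) (cosh_pow_four_le t)

lemma hasDerivAt_sech (x : ℝ) :
    HasDerivAt sech (-Real.sinh x / Real.cosh x ^ 2) x := by
  have h := (Real.hasDerivAt_cosh x).inv (Real.cosh_pos x).ne'
  have : sech = fun y => (Real.cosh y)⁻¹ := by funext y; rw [sech, one_div]
  rw [this]
  exact h

lemma continuous_sech : Continuous sech :=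
  continuous_const.div Real.continuous_cosh fun x => (Real.cosh_pos x).ne'

lemma sech_le_two_exp (x : ℝ) : sech x ≤ 2 * Real.exp (-|x|) := by
  have h : Real.exp |x| / 2 ≤ Real.cosh x := by
    rw [Real.cosh_eq]
    rcases abs_cases x with ⟨h1, _⟩ | ⟨h1, _⟩ <;> rw [h1] <;>
      nlinarith [Real.exp_pos x, Real.exp_pos (-x)]
  calc sech x = 1 / Real.cosh x := rfl
    _ ≤ 1 / (Real.exp |x| / 2) :=
        one_div_le_one_div_of_le (by positivity) h
    _ = 2 * Real.exp (-|x|) := by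
        rw [Real.exp_neg]
        field_simp

lemma integrable_exp_neg_abs {b : ℝ} (hb : 0 < b) :
    Integrable (fun x : ℝ => Real.exp (-b * |x|)) := by
  have hIoi : IntegrableOn (fun x : ℝ => Real.exp (-b * |x|)) (Set.Ioi 0) := by
    refine (exp_neg_integrableOn_Ioi 0 hb).congr_fun ?_ measurableSet_Ioi
    intro x hx
    simp only []
    rw [abs_of_pos hx]
  have hIic : IntegrableOn (fun x : ℝ => Real.exp (-b * |x|)) (Set.Iic 0) := by
    rw [IntegrableOn, ← Measure.map_neg_eq_self (volume : Measure ℝ)]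
    have m : MeasurableEmbedding fun x : ℝ => -x :=
      (Homeomorph.neg ℝ).measurableEmbedding
    rw [m.restrict_map, m.integrable_map_iff]
    simp_rw [Function.comp_def, abs_neg, Set.neg_preimage, Set.neg_Iic, neg_zero]
    exact (integrableOn_Ici_iff_integrableOn_Ioi).mpr hIoi
  have h := hIic.union hIoi
  rwa [Set.Iic_union_Ioi, integrableOn_univ] at h

lemma abs_mul_exp_neg_le {t : ℝ} (ht : 0 ≤ t) : t * Real.exp (-t) ≤ 1 := by
  have h1 : t ≤ Real.exp t := by linarith [Real.add_one_le_exp t]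
  calc t * Real.exp (-t) ≤ Real.exp t * Real.exp (-t) :=
        mul_le_mul_of_nonneg_right h1 (Real.exp_pos _).le
    _ = 1 := by rw [← Real.exp_add]; simp

set_option maxHeartbeats 2000000 in
theorem weighted_H1_controlled_by_derivative :
    ∃ C > 0, ∀ v : ℝ → ℝ,
      (∀ x : ℝ, v (-x) = -v x) →
      Differentiable ℝ v →
      Integrable (fun x => (sech (x / (8 * Real.sqrt 2)) * v x) ^ 2) →
      Integrable (fun x => (deriv (fun y => sech (y / (8 * Real.sqrt 2)) * v y) x) ^ 2) →
      (∫ x : ℝ, ((deriv v x) ^ 2 + (v x) ^ 2) * sech (x / (2 * Real.sqrt 2)))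
        ≤ C * (∫ x : ℝ, (deriv (fun y => sech (y / (8 * Real.sqrt 2)) * v y) x) ^ 2) := by
  have hs2 : (0 : ℝ) < Real.sqrt 2 := Real.sqrt_pos.mpr (by norm_num)
  set c : ℝ := 8 * Real.sqrt 2 with hc_def
  have hc : 0 < c := by positivity
  have hc2 : c ^ 2 = 128 := by
    rw [hc_def, mul_pow, Real.sq_sqrt (by norm_num : (0:ℝ) ≤ 2)]
    norm_num
  -- integrability of the weight |x| * sech(x/c)^2
  have hKint : Integrable (fun x : ℝ => |x| * sech (x / c) ^ 2) := by
    refine Integrable.mono' ((integrable_exp_neg_abs (b := 1 / c) (by positivity)).const_mul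
      (4 * c)) ?_ (Filter.Eventually.of_forall fun x => ?_)
    · exact ((continuous_abs.mul ((continuous_sech.comp
        (continuous_id.div_const c)).pow 2))).aestronglyMeasurable
    · have ht : 0 ≤ |x| / c := by positivity
      have h1 : sech (x / c) ≤ 2 * Real.exp (-(|x| / c)) := by
        have := sech_le_two_exp (x / c)
        rwa [abs_div, abs_of_pos hc] at this
      have h2 : sech (x / c) ^ 2 ≤ 4 * (Real.exp (-(|x| / c)) * Real.exp (-(|x| / c))) := by
        nlinarith [sech_pos (x / c), Real.exp_pos (-(|x| / c))]
      have h3 : |x| * Real.exp (-(|x| / c)) ≤ c := by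
        have := abs_mul_exp_neg_le ht
        have hx : |x| * Real.exp (-(|x| / c)) = c * ((|x| / c) * Real.exp (-(|x| / c))) := by
          field_simp
        rw [hx]
        calc c * ((|x| / c) * Real.exp (-(|x| / c))) ≤ c * 1 :=
              mul_le_mul_of_nonneg_left this hc.le
          _ = c := mul_one c
      have h4 : Real.exp (-(1 / c) * |x|) = Real.exp (-(|x| / c)) := by
        congr 1; field_simp
      rw [Real.norm_eq_abs, abs_of_nonneg (by positivity), h4]
      calc |x| * sech (x / c) ^ 2
          ≤ |x| * (4 * (Real.exp (-(|x| / c)) * Real.exp (-(|x| / c)))) :=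
            mul_le_mul_of_nonneg_left h2 (abs_nonneg x)
        _ = 4 * (|x| * Real.exp (-(|x| / c))) * Real.exp (-(|x| / c)) := by ring
        _ ≤ 4 * c * Real.exp (-(|x| / c)) := by
            have := Real.exp_pos (-(|x| / c))
            nlinarith [Real.exp_pos (-(|x| / c))]
  set K : ℝ := ∫ x : ℝ, |x| * sech (x / c) ^ 2 with hK_def
  have hK0 : 0 ≤ K := integral_nonneg fun x => by positivity
  refine ⟨2 + 2 * K, by positivity, ?_⟩
  intro v hodd hdv hw2 hw'2
  set W : ℝ → ℝ := fun y => sech (y / c) * v y with hW_def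
  -- basic facts about W
  have hv0 : v 0 = 0 := by have := hodd 0; simp at this; linarith
  have hW0 : W 0 = 0 := by simp [hW_def, hv0]
  have hWodd : ∀ x, W (-x) = -W x := by
    intro x
    simp only [hW_def]
    rw [neg_div, hodd x]
    have : sech (-(x / c)) = sech (x / c) := by rw [sech, sech, Real.cosh_neg]
    rw [this]; ring
  have hW : ∀ y : ℝ, HasDerivAt W
      (-Real.sinh (y / c) / Real.cosh (y / c) ^ 2 * (1 / c) * v y
        + sech (y / c) * deriv v y) y := by
    intro y
    have h1 : HasDerivAt (fun t : ℝ => t / c) (1 / c) y := by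
      simpa using (hasDerivAt_id y).div_const c
    have h2 : HasDerivAt (fun t : ℝ => sech (t / c))
        (-Real.sinh (y / c) / Real.cosh (y / c) ^ 2 * (1 / c)) y :=
      by have := (hasDerivAt_sech (y / c)).comp y h1; exact this
    exact h2.mul (hdv y).hasDerivAt
  have hW' : ∀ y : ℝ, deriv W y
      = -Real.sinh (y / c) / Real.cosh (y / c) ^ 2 * (1 / c) * v y
        + sech (y / c) * deriv v y := fun y => (hW y).deriv
  set I : ℝ := ∫ x : ℝ, (deriv W x) ^ 2 with hI_def
  have hI0 : 0 ≤ I := integral_nonneg fun x => sq_nonneg _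
  have hmW' : Measurable (deriv W) := measurable_deriv W
  -- interval integrability of deriv W
  have hII : ∀ x : ℝ, 0 ≤ x → IntervalIntegrable (deriv W) volume 0 x := by
    intro x hx
    rw [intervalIntegrable_iff_integrableOn_Ioc_of_le hx]
    have hgint : IntegrableOn (fun t => (deriv W t) ^ 2 + 1) (Set.Ioc 0 x) := by
      exact (hw'2.integrableOn (s := Set.Ioc 0 x)).add
        (integrableOn_const measure_Ioc_lt_top.ne)
    refine Integrable.mono' hgint (hmW'.aestronglyMeasurable.restrict)
      (Filter.Eventually.of_forall fun t => ?_)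
    rw [Real.norm_eq_abs]
    nlinarith [sq_abs (deriv W t), sq_nonneg (|deriv W t| - 1), abs_nonneg (deriv W t)]
  -- the key pointwise bound on W via FTC + Cauchy-Schwarz (AM-GM form)
  have key : ∀ x : ℝ, 0 ≤ x → (W x) ^ 2 ≤ I * x := by
    intro x hx
    have hub : ∀ lam : ℝ, 0 < lam → |W x| ≤ I / (2 * lam) + lam * x / 2 := by
      intro lam hlam
      have hInt := hII x hx
      have hftc : ∫ t in (0 : ℝ)..x, deriv W t = W x := by
        rw [intervalIntegral.integral_deriv_eq_sub
          (fun t _ => (hW t).differentiableAt) hInt, hW0, sub_zero]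
      have hsq_II : IntervalIntegrable (fun t => (deriv W t) ^ 2 / (2 * lam) + lam / 2)
          volume 0 x := by
        refine IntervalIntegrable.add ?_ intervalIntegrable_const
        rw [intervalIntegrable_iff_integrableOn_Ioc_of_le hx]
        exact (hw'2.integrableOn).div_const _
      have hsqI : ∫ t in (0 : ℝ)..x, (deriv W t) ^ 2 ≤ I := by
        rw [intervalIntegral.integral_of_le hx]
        exact setIntegral_le_integral hw'2 (Filter.Eventually.of_forall fun t => sq_nonneg _)
      calc |W x| = |∫ t in (0 : ℝ)..x, deriv W t| := by rw [hftc]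
        _ ≤ ∫ t in (0 : ℝ)..x, |deriv W t| :=
            intervalIntegral.abs_integral_le_integral_abs hx
        _ ≤ ∫ t in (0 : ℝ)..x, ((deriv W t) ^ 2 / (2 * lam) + lam / 2) := by
            refine intervalIntegral.integral_mono_on hx hInt.abs hsq_II fun t _ => ?_
            have hk2 : |deriv W t| * (2 * lam) ≤ (deriv W t) ^ 2 + lam ^ 2 := by
              nlinarith [sq_nonneg (|deriv W t| - lam), sq_abs (deriv W t)]
            calc |deriv W t| = (|deriv W t| * (2 * lam)) / (2 * lam) := by
                  field_simp
              _ ≤ ((deriv W t) ^ 2 + lam ^ 2) / (2 * lam) := by gcongr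
              _ = (deriv W t) ^ 2 / (2 * lam) + lam / 2 := by
                  field_simp
        _ = (∫ t in (0 : ℝ)..x, (deriv W t) ^ 2) / (2 * lam) + lam * x / 2 := by
            rw [intervalIntegral.integral_add ((by
              rw [intervalIntegrable_iff_integrableOn_Ioc_of_le hx]
              exact (hw'2.integrableOn).div_const _ :
                IntervalIntegrable (fun t => (deriv W t) ^ 2 / (2 * lam)) volume 0 x))
              intervalIntegrable_const, intervalIntegral.integral_div,
              intervalIntegral.integral_const]
            simp [smul_eq_mul]
            ring
        _ ≤ I / (2 * lam) + lam * x / 2 := by gcongr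
    rcases hx.eq_or_lt with h | h
    · rw [← h]; simp [hW0]
    · have hsq : ∀ ε : ℝ, 0 < ε → (W x) ^ 2 ≤ I * x + ε := by
        intro ε hε
        set lam := Real.sqrt ((I + ε / x) / x) with hlam_def
        have hpos : 0 < (I + ε / x) / x := by positivity
        have hlam : 0 < lam := Real.sqrt_pos.mpr hpos
        have hlam2 : lam ^ 2 = (I + ε / x) / x := Real.sq_sqrt hpos.le
        have h1 := hub lam hlam
        have hIle : I ≤ lam ^ 2 * x := by
          rw [hlam2, div_mul_cancel₀ _ h.ne']
          have : 0 < ε / x := by positivity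
          linarith
        have h2 : I / (2 * lam) + lam * x / 2 ≤ lam * x := by
          have hstep : I / (2 * lam) ≤ (lam ^ 2 * x) / (2 * lam) := by gcongr
          have heq : (lam ^ 2 * x) / (2 * lam) = lam * x / 2 := by
            field_simp
          rw [heq] at hstep
          linarith
        have h3 : |W x| ≤ lam * x := le_trans h1 h2
        have h4 : (W x) ^ 2 ≤ (lam * x) ^ 2 := by
          rw [← sq_abs (W x)]
          exact pow_le_pow_left₀ (abs_nonneg _) h3 2
        calc (W x) ^ 2 ≤ (lam * x) ^ 2 := h4
          _ = lam ^ 2 * x * x := by ring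
          _ = (I + ε / x) * x := by rw [hlam2, div_mul_cancel₀ _ h.ne']
          _ = I * x + ε := by field_simp
      exact le_of_forall_pos_le_add hsq
  have key' : ∀ x : ℝ, (W x) ^ 2 ≤ I * |x| := by
    intro x
    rcases le_total 0 x with h | h
    · rw [abs_of_nonneg h]; exact key x h
    · rw [abs_of_nonpos h]
      have h2 := key (-x) (neg_nonneg.mpr h)
      have h3 : (W x) ^ 2 = (W (-x)) ^ 2 := by rw [hWodd x, neg_sq]
      rw [h3]; exact h2
  -- pointwise main bound
  have hpt : ∀ x : ℝ, ((deriv v x) ^ 2 + (v x) ^ 2) * sech (x / (2 * Real.sqrt 2))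
      ≤ 2 * (deriv W x) ^ 2 + 2 * I * (|x| * sech (x / c) ^ 2) := by
    intro x
    set s : ℝ := sech (x / c) with hs_def
    set s' : ℝ := -Real.sinh (x / c) / Real.cosh (x / c) ^ 2 * (1 / c) with hs'_def
    have hs0 : 0 < s := sech_pos _
    have hs1 : s ≤ 1 := sech_le_one _
    have hWx : W x = s * v x := rfl
    have hW'x : deriv W x = s' * v x + s * deriv v x := hW' x
    have hcosh : 0 < Real.cosh (x / c) := Real.cosh_pos _
    have hsinh2 : Real.sinh (x / c) ^ 2 ≤ Real.cosh (x / c) ^ 2 := by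
      nlinarith [Real.cosh_sq (x / c)]
    have hseq : s * Real.cosh (x / c) = 1 := by
      rw [hs_def, sech]; field_simp
    have hs'b : s' ^ 2 ≤ s ^ 2 / 64 := by
      have he : s' * (Real.cosh (x / c) ^ 2 * c) = -Real.sinh (x / c) := by
        rw [hs'_def]; field_simp
      have he2 : s' ^ 2 * (Real.cosh (x / c) ^ 2 * c) ^ 2 = Real.sinh (x / c) ^ 2 := by
        rw [← mul_pow, he, neg_sq]
      have hs2eq : s ^ 2 * Real.cosh (x / c) ^ 2 = 1 := by
        rw [← mul_pow, hseq, one_pow]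
      have hcosh2 : 0 < Real.cosh (x / c) ^ 2 := by positivity
      have he3 : s' ^ 2 * (Real.cosh (x / c) ^ 4 * c ^ 2) = Real.sinh (x / c) ^ 2 := by
        linear_combination he2
      have he4 : s' ^ 2 * (Real.cosh (x / c) ^ 4 * 128) = Real.sinh (x / c) ^ 2 := by
        rw [← hc2]; linear_combination he3
      have hu : s' ^ 2 * Real.cosh (x / c) ^ 2 * 128 ≤ 1 := by
        refine le_of_mul_le_mul_right ?_ hcosh2
        have : s' ^ 2 * Real.cosh (x / c) ^ 2 * 128 * Real.cosh (x / c) ^ 2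
            = Real.sinh (x / c) ^ 2 := by linear_combination he4
        rw [this, one_mul]
        exact hsinh2
      refine le_of_mul_le_mul_right ?_ hcosh2
      have : s ^ 2 / 64 * Real.cosh (x / c) ^ 2 = 1 / 64 := by
        linear_combination (1 / 64 : ℝ) * hs2eq
      rw [this]
      linarith
    have hA : sech (x / (2 * Real.sqrt 2)) ≤ s ^ 4 := by
      have harg : x / (2 * Real.sqrt 2) = 4 * (x / c) := by
        have h2 : Real.sqrt 2 ≠ 0 := hs2.ne'
        rw [hc_def]
        field_simp
        ring
      rw [harg, hs_def]
      exact sech_four_mul (x / c)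
    have hkey := key' x
    have he : s ^ 2 * deriv v x = s * deriv W x - s' * W x := by
      rw [hW'x, hWx]; ring
    have hss : s ^ 2 ≤ 1 := pow_le_one₀ hs0.le hs1
    have h1 : (s ^ 2 * deriv v x) ^ 2 ≤ 2 * (deriv W x) ^ 2 + s ^ 2 * (W x) ^ 2 / 32 := by
      rw [he]
      have k1 : (s * deriv W x - s' * W x) ^ 2
          ≤ 2 * (s ^ 2 * (deriv W x) ^ 2) + 2 * (s' ^ 2 * (W x) ^ 2) := by
        nlinarith [sq_nonneg (s * deriv W x + s' * W x)]
      have k2 : s ^ 2 * (deriv W x) ^ 2 ≤ 1 * (deriv W x) ^ 2 :=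
        mul_le_mul_of_nonneg_right hss (sq_nonneg _)
      have k3 : s' ^ 2 * (W x) ^ 2 ≤ s ^ 2 / 64 * (W x) ^ 2 :=
        mul_le_mul_of_nonneg_right hs'b (sq_nonneg _)
      linarith
    have h2 : ((deriv v x) ^ 2 + (v x) ^ 2) * sech (x / (2 * Real.sqrt 2))
        ≤ ((deriv v x) ^ 2 + (v x) ^ 2) * s ^ 4 := by
      apply mul_le_mul_of_nonneg_left hA (by positivity)
    have h3 : ((deriv v x) ^ 2 + (v x) ^ 2) * s ^ 4
        = (s ^ 2 * deriv v x) ^ 2 + s ^ 2 * (W x) ^ 2 := by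
      rw [hWx]; ring
    have h4 : s ^ 2 * (W x) ^ 2 ≤ s ^ 2 * (I * |x|) :=
      mul_le_mul_of_nonneg_left hkey (sq_nonneg s)
    have h5 : 0 ≤ s ^ 2 * (I * |x|) :=
      mul_nonneg (sq_nonneg s) (mul_nonneg hI0 (abs_nonneg x))
    calc ((deriv v x) ^ 2 + (v x) ^ 2) * sech (x / (2 * Real.sqrt 2))
        ≤ ((deriv v x) ^ 2 + (v x) ^ 2) * s ^ 4 := h2
      _ = (s ^ 2 * deriv v x) ^ 2 + s ^ 2 * (W x) ^ 2 := h3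
      _ ≤ 2 * (deriv W x) ^ 2 + s ^ 2 * (W x) ^ 2 / 32 + s ^ 2 * (W x) ^ 2 := by linarith
      _ ≤ 2 * (deriv W x) ^ 2 + s ^ 2 * (I * |x|) / 32 + s ^ 2 * (I * |x|) := by linarith
      _ ≤ 2 * (deriv W x) ^ 2 + 2 * (s ^ 2 * (I * |x|)) := by linarith
      _ = 2 * (deriv W x) ^ 2 + 2 * I * (|x| * s ^ 2) := by ring
  -- integral comparison
  have hg_int : Integrable (fun x : ℝ =>
      2 * (deriv W x) ^ 2 + 2 * I * (|x| * sech (x / c) ^ 2)) :=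
    (hw'2.const_mul 2).add (hKint.const_mul (2 * I))
  have hmono := integral_mono_of_nonneg
    (Filter.Eventually.of_forall fun x => by
      simp only [Pi.zero_apply]
      exact mul_nonneg (by positivity) (sech_pos _).le)
    hg_int (Filter.Eventually.of_forall hpt)
  have hgval : ∫ x : ℝ, (2 * (deriv W x) ^ 2 + 2 * I * (|x| * sech (x / c) ^ 2))
      = 2 * I + 2 * I * K := by
    rw [integral_add (hw'2.const_mul 2) (hKint.const_mul (2 * I)),
      integral_const_mul, integral_const_mul]
  rw [hgval] at hmono
  calc (∫ x : ℝ, ((deriv v x) ^ 2 + (v x) ^ 2) * sech (x / (2 * Real.sqrt 2)))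
      ≤ 2 * I + 2 * I * K := hmono
    _ = (2 + 2 * K) * I := by ring
end
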